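/- arXiv:1904.07682 — 6 statements merged into one kernel-verified Lean document; each statement's English description precedes it below -/
import Mathlib

section
/- Let G be an abelian group with k̃ elements and let 0<p<1 be such that min(p,1−p) ≥ 10^3·(log k̃)^{1/2}·k̃^{−1/5}. If Λ ⊆ G∖{0} is chosen by the random procedure, then with probability 1−o(1) (as k̃ → ∞, uniformly over all admissible p) the set Λ is a generating set of the group G. -/
universe u v

open Filter

/-- The Cayley graph of an additive abelian group `G` with connection set `Λ`:
distinct vertices `x y : G` are adjacent iff `x - y ∈ Λ` (for `Λ` with `Λ = -Λ`). -/
def cayleyGraph (G : Type u) [AddCommGroup G] (Λ : Set G) : SimpleGraph G where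
  Adj x y := x ≠ y ∧ x - y ∈ Λ ∧ y - x ∈ Λ
  symm := by
    constructor
    rintro x y ⟨h1, h2, h3⟩
    exact ⟨fun e => h1 e.symm, h3, h2⟩
  loopless := by
    constructor
    rintro x ⟨h1, -, -⟩
    exact h1 rfl

/-- `Λ` is a possible outcome of the random procedure: `0 ∉ Λ` and `Λ = -Λ`. -/
def IsSymmetricSubset {G : Type u} [AddCommGroup G] (Λ : Finset G) : Prop :=
  (0 : G) ∉ Λ ∧ ∀ g ∈ Λ, -g ∈ Λ

/-- The number of negation-pairs `{g, -g}` among the elements of `Λ`. -/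
noncomputable def pairCount {G : Type u} [AddCommGroup G] (Λ : Finset G) : ℕ :=
  letI := Classical.decEq G
  (Λ.image fun g => ({g, -g} : Finset G)).card

/-- The probability that the random procedure with parameter `p` (each pair
`{g, -g} ⊆ G \ {0}` is included independently with probability `p`) produces
exactly the symmetric set `Λ`. -/
noncomputable def lambdaWeight {G : Type u} [AddCommGroup G] [Fintype G] (p : ℝ)
    (Λ : Finset G) : ℝ :=
  letI := Classical.decEq G
  p ^ pairCount Λ * (1 - p) ^ (pairCount ((Finset.univ : Finset G).erase 0) - pairCount Λ)

open Classical in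
/-- The probability that the random set `Λ ⊆ G \ {0}` produced by the random procedure
with parameter `p` satisfies the predicate `P`. -/
noncomputable def lambdaProb (G : Type u) [AddCommGroup G] [Fintype G] (p : ℝ)
    (P : Finset G → Prop) : ℝ :=
  ∑ Λ : Finset G, if IsSymmetricSubset Λ ∧ P Λ then lambdaWeight p Λ else 0

/-- `emb(H, Γ)`: the number of graph embeddings of `H` into `Γ`. -/
noncomputable def embCount {α : Type u} {β : Type v} (H : SimpleGraph α)
    (Γ : SimpleGraph β) : ℕ :=
  Nat.card (H ↪g Γ)

/-- `emb(H, n)`: the maximum of `emb(H, Γ)` over all `n`-vertex graphs `Γ`. -/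
noncomputable def embMax {α : Type u} (H : SimpleGraph α) (n : ℕ) : ℕ :=
  sSup {m | ∃ Γ : SimpleGraph (Fin n), embCount H Γ = m}

/-- The number of vertex subsets of `Γ` inducing a copy of `H`. -/
noncomputable def indCount {α : Type u} {β : Type v} (H : SimpleGraph α)
    (Γ : SimpleGraph β) : ℕ :=
  Nat.card {s : Set β // Nonempty ((Γ.induce s) ≃g H)}

/-- `ind(H, n)`: the maximum number of induced copies of `H` in an `n`-vertex graph. -/
noncomputable def indMax {α : Type u} (H : SimpleGraph α) (n : ℕ) : ℕ :=
  sSup {m | ∃ Γ : SimpleGraph (Fin n), indCount H Γ = m}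

/-- `Γ` is a blow-up of `H` with (non-empty) parts `W i`, `i ∈ V(H)`. -/
def IsBlowupWith {α : Type u} {β : Type v} (H : SimpleGraph α) (Γ : SimpleGraph β)
    (W : α → Set β) : Prop :=
  (∀ i, (W i).Nonempty) ∧ (∀ x : β, ∃! i, x ∈ W i) ∧
    ∀ i j, i ≠ j → ∀ x ∈ W i, ∀ y ∈ W j, (Γ.Adj x y ↔ H.Adj i j)

/-- Auxiliary fuelled version of "balanced iterated blow-up". -/
def IsBIBAux {α : Type u} (H : SimpleGraph α) : ℕ → ∀ (β : Type v), SimpleGraph β → Prop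
  | 0, β, _ => Nat.card β < Nat.card α
  | n + 1, β, Γ =>
      Nat.card β < Nat.card α ∨
        ∃ W : α → Set β, IsBlowupWith H Γ W ∧
          (∀ i j, Nat.card (W i) ≤ Nat.card (W j) + 1) ∧
          ∀ i, IsBIBAux H n ↥(W i) (Γ.induce (W i))

/-- `Γ` is a balanced iterated blow-up of `H`: either `|V(Γ)| < |V(H)|`, or `Γ` is a
balanced blow-up of `H` each of whose parts induces a balanced iterated blow-up of `H`. -/
def IsBalancedIterBlowup {α : Type u} {β : Type v} (H : SimpleGraph α)
    (Γ : SimpleGraph β) : Prop :=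
  IsBIBAux H (Nat.card β + 1) β Γ

/-- `φ` is one of the `2k̃` rotations and reflections of a Cayley graph on `G`. -/
def IsRotOrRefl {G : Type u} [AddCommGroup G] (φ : G → G) : Prop :=
  (∃ g : G, ∀ x : G, φ x = x + g) ∨ ∃ g : G, ∀ x : G, φ x = -x + g

/-- A graph is prime if no subset `U` with `2 ≤ |U| < |V(H)|` is such that every vertex
outside `U` is complete to `U` or has no edges to `U`. -/
def IsPrimeGraph {α : Type u} (H : SimpleGraph α) : Prop :=
  ¬ ∃ U : Set α, 2 ≤ Nat.card U ∧ Nat.card U < Nat.card α ∧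
      ∀ x ∉ U, (∀ y ∈ U, H.Adj x y) ∨ ∀ y ∈ U, ¬ H.Adj x y

/-- A signature of `H`: distinct vertices outside `S` have distinct neighbourhoods in `S`. -/
def IsSignature {α : Type u} (H : SimpleGraph α) (S : Set α) : Prop :=
  ∀ v ∉ S, ∀ w ∉ S, v ≠ w → H.neighborSet v ∩ S ≠ H.neighborSet w ∩ S

/-- An `r`-super-signature of `H`. -/
def IsSuperSignature {α : Type u} (H : SimpleGraph α) (r : ℝ) (S : Set α) : Prop :=
  S.Nonempty ∧ ∀ v ∉ S, ∀ w ∉ S, v ≠ w →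
    r * (Nat.card S : ℝ) ≤
      (Nat.card ↥(symmDiff (H.neighborSet v) (H.neighborSet w) ∩ S) : ℝ)

/-- The Cayley graph `cayleyGraph G Λ` is `(q₀, δ₀)`-typical. -/
def IsTypical {G : Type u} [AddCommGroup G] [Fintype G] (Λ : Set G) (q₀ δ₀ : ℝ) : Prop :=
  (∀ v : G,
      q₀ * (Fintype.card G : ℝ) ≤ (Nat.card ((cayleyGraph G Λ).neighborSet v) : ℝ) ∧
        (Nat.card ((cayleyGraph G Λ).neighborSet v) : ℝ) ≤
          (1 - q₀) * (Fintype.card G : ℝ)) ∧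
    (∀ v w : G, v ≠ w →
      q₀ * (Fintype.card G : ℝ) ≤
        (Nat.card {u : G | u ≠ v ∧ u ≠ w ∧
          Xor' ((cayleyGraph G Λ).Adj u v) ((cayleyGraph G Λ).Adj u w)} : ℝ)) ∧
    (¬ ∃ X Y : Set G, Disjoint X Y ∧
      2 * (Fintype.card G : ℝ) ^ ((4 : ℝ) / 5) ≤ (Nat.card X : ℝ) ∧
      2 * (Fintype.card G : ℝ) ^ ((4 : ℝ) / 5) ≤ (Nat.card Y : ℝ) ∧
      ((∀ x ∈ X, ∀ y ∈ Y, (cayleyGraph G Λ).Adj x y) ∨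
        ∀ x ∈ X, ∀ y ∈ Y, ¬ (cayleyGraph G Λ).Adj x y)) ∧
    ∀ (X : Set G) (f : G → G),
      (1 - δ₀) * (Fintype.card G : ℝ) ≤ (Nat.card X : ℝ) →
      Set.InjOn f X →
      (∀ v ∈ X, ∀ w ∈ X, v ≠ w →
        ((cayleyGraph G Λ).Adj (f v) (f w) ↔ (cayleyGraph G Λ).Adj v w)) →
      ∃ φ : G → G, IsRotOrRefl φ ∧ Set.EqOn f φ X

/-- The induced subgraph of the Cayley graph `cayleyGraph G Λ` on the vertex set `K`
is a `(q, δ)`-reasonable induced subgraph. -/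
def IsReasonable {G : Type u} [AddCommGroup G] [Fintype G] (Λ K : Set G) (q δ : ℝ) : Prop :=
  IsPrimeGraph ((cayleyGraph G Λ).induce K) ∧
    (∀ v w : G, v ≠ w →
      q * (Nat.card K : ℝ) ≤
        (Nat.card {u : G | u ∈ K ∧ u ≠ v ∧ u ≠ w ∧
          Xor' ((cayleyGraph G Λ).Adj u v) ((cayleyGraph G Λ).Adj u w)} : ℝ)) ∧
    ∀ (X : Set G) (f : G → G),
      (1 - δ) * (Nat.card K : ℝ) ≤ (Nat.card X : ℝ) →
      Set.InjOn f X →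
      (∀ v ∈ X, ∀ w ∈ X, v ≠ w →
        ((cayleyGraph G Λ).Adj (f v) (f w) ↔ (cayleyGraph G Λ).Adj v w)) →
      ∃ φ : G → G, IsRotOrRefl φ ∧ Set.EqOn f φ X

/-- `E_ℓ(m) = m₁ ⋯ m_ℓ` where `⌈m/ℓ⌉ ≥ m₁ ≥ … ≥ m_ℓ ≥ ⌊m/ℓ⌋` and `m₁ + … + m_ℓ = m`. -/
def Epart (ℓ m : ℕ) : ℕ := (m / ℓ + 1) ^ (m % ℓ) * (m / ℓ) ^ (ℓ - m % ℓ)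

/-- The rotation `y ↦ y + g` of a Cayley graph on `G`. -/
def rotationMap {G : Type u} [AddCommGroup G] (g : G) : G → G := fun y => y + g

/-- The reflection `y ↦ -y + g` of a Cayley graph on `G`. -/
def reflectionMap {G : Type u} [AddCommGroup G] (g : G) : G → G := fun y => -y + g

/-- The family of the `2k̃` rotations and reflections, indexed by `Bool × G`. -/
def rotRefl {G : Type u} [AddCommGroup G] : Bool × G → G → G
  | (false, g) => rotationMap g
  | (true, g) => reflectionMap g

/-! ### Auxiliary lemmas for `statement4` -/

section Statement4Aux

variable {G : Type} [AddCommGroup G] [Fintype G]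

lemma mem_pair' [DecidableEq G] {a g : G} :
    a ∈ ({g, -g} : Finset G) ↔ a = g ∨ a = -g := by
  simp [Finset.mem_insert]

lemma pair_eq_of_mem [DecidableEq G] {a g : G} (h : a ∈ ({g, -g} : Finset G)) :
    ({a, -a} : Finset G) = {g, -g} := by
  rcases mem_pair'.mp h with rfl | rfl
  · rfl
  · rw [neg_neg, Finset.pair_comm]

open Classical in
lemma aux_sum_weight (G : Type) [AddCommGroup G] [Fintype G] (p : ℝ) (T : Finset G)
    (hT0 : (0 : G) ∉ T) (hTn : ∀ g ∈ T, -g ∈ T) :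
    ∑ Λ : Finset G, (if IsSymmetricSubset Λ ∧ Λ ⊆ T then lambdaWeight p Λ else 0)
      = (1 - p) ^ (pairCount ((Finset.univ : Finset G).erase 0) - pairCount T) := by
  letI := Classical.decEq G
  set f : G → Finset G := fun g => ({g, -g} : Finset G) with hf
  set M : ℕ := pairCount ((Finset.univ : Finset G).erase 0) with hM
  set s : Finset (Finset G) := T.image f with hs
  have hsM : s.card ≤ M := by
    apply Finset.card_le_card
    apply Finset.image_subset_image
    intro g hg
    exact Finset.mem_erase.mpr ⟨fun h => hT0 (h ▸ hg), Finset.mem_univ g⟩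
  have step1 : ∑ Λ : Finset G, (if IsSymmetricSubset Λ ∧ Λ ⊆ T then lambdaWeight p Λ else 0)
      = ∑ Λ ∈ Finset.univ.filter (fun Λ => IsSymmetricSubset Λ ∧ Λ ⊆ T), lambdaWeight p Λ := by
    exact (Finset.sum_filter _ _).symm
  rw [step1]
  have step2 : ∑ Λ ∈ Finset.univ.filter (fun Λ => IsSymmetricSubset Λ ∧ Λ ⊆ T), lambdaWeight p Λ
      = ∑ A ∈ s.powerset, p ^ A.card * (1 - p) ^ (M - A.card) := by
    refine Finset.sum_nbij' (fun Λ => Λ.image f) (fun A => A.biUnion id) ?_ ?_ ?_ ?_ ?_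
    · intro Λ hΛ
      rw [Finset.mem_filter] at hΛ
      exact Finset.mem_powerset.mpr (Finset.image_subset_image hΛ.2.2)
    · intro A hA
      rw [Finset.mem_powerset] at hA
      rw [Finset.mem_filter]
      have hmem : ∀ x ∈ A.biUnion id, x ∈ T := by
        intro x hx
        rw [Finset.mem_biUnion] at hx
        obtain ⟨P, hP, hxP⟩ := hx
        obtain ⟨g, hg, rfl⟩ := Finset.mem_image.mp (hA hP)
        rcases mem_pair'.mp hxP with rfl | rfl
        · exact hg
        · exact hTn g hg
      refine ⟨Finset.mem_univ _, ⟨fun h0 => hT0 (hmem 0 h0), ?_⟩, hmem⟩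
      intro x hx
      rw [Finset.mem_biUnion] at hx ⊢
      obtain ⟨P, hP, hxP⟩ := hx
      refine ⟨P, hP, ?_⟩
      obtain ⟨g, hg, rfl⟩ := Finset.mem_image.mp (hA hP)
      rcases mem_pair'.mp hxP with rfl | rfl
      · exact mem_pair'.mpr (Or.inr rfl)
      · rw [neg_neg]; exact mem_pair'.mpr (Or.inl rfl)
    · intro Λ hΛ
      rw [Finset.mem_filter] at hΛ
      obtain ⟨-, ⟨h0, hneg⟩, hsub⟩ := hΛ
      ext x
      simp only [Finset.mem_biUnion, Finset.mem_image, id]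
      constructor
      · rintro ⟨P, ⟨g, hg, rfl⟩, hxP⟩
        rcases mem_pair'.mp hxP with rfl | rfl
        · exact hg
        · exact hneg g hg
      · intro hx
        exact ⟨f x, ⟨x, hx, rfl⟩, mem_pair'.mpr (Or.inl rfl)⟩
    · intro A hA
      rw [Finset.mem_powerset] at hA
      ext P
      simp only [Finset.mem_image, Finset.mem_biUnion, id]
      constructor
      · rintro ⟨x, ⟨Q, hQ, hxQ⟩, rfl⟩
        obtain ⟨g, hg, rfl⟩ := Finset.mem_image.mp (hA hQ)
        show ({x, -x} : Finset G) ∈ A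
        rw [pair_eq_of_mem hxQ]
        exact hQ
      · intro hP
        obtain ⟨g, hg, rfl⟩ := Finset.mem_image.mp (hA hP)
        refine ⟨g, ⟨f g, hP, ?_⟩, rfl⟩
        exact mem_pair'.mpr (Or.inl rfl)
    · intro Λ hΛ
      rfl
  rw [step2]
  have key : ∑ A ∈ s.powerset, p ^ A.card * (1 - p) ^ (s.card - A.card) = 1 := by
    have h1 : ∏ _i ∈ s, (p + (1 - p)) = ∑ A ∈ s.powerset, (∏ _i ∈ A, p) * ∏ _i ∈ s \ A, (1 - p) :=
      Finset.prod_add _ _ s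
    simp only [Finset.prod_const] at h1
    calc ∑ A ∈ s.powerset, p ^ A.card * (1 - p) ^ (s.card - A.card)
        = ∑ A ∈ s.powerset, p ^ A.card * (1 - p) ^ (s \ A).card := by
          refine Finset.sum_congr rfl fun A hA => ?_
          rw [Finset.card_sdiff_of_subset (Finset.mem_powerset.mp hA)]
      _ = (p + (1 - p)) ^ s.card := h1.symm
      _ = 1 := by norm_num
  calc ∑ A ∈ s.powerset, p ^ A.card * (1 - p) ^ (M - A.card)
      = ∑ A ∈ s.powerset, (p ^ A.card * (1 - p) ^ (s.card - A.card)) * (1 - p) ^ (M - s.card) := by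
        refine Finset.sum_congr rfl fun A hA => ?_
        have hAs : A.card ≤ s.card := Finset.card_le_card (Finset.mem_powerset.mp hA)
        rw [mul_assoc, ← pow_add]
        congr 2
        omega
    _ = (1 - p) ^ (M - s.card) := by rw [← Finset.sum_mul, key, one_mul]
    _ = (1 - p) ^ (M - pairCount T) := rfl

open Classical in
lemma sum_weight_total (G : Type) [AddCommGroup G] [Fintype G] (p : ℝ) :
    ∑ Λ : Finset G, (if IsSymmetricSubset Λ then lambdaWeight p Λ else 0) = 1 := by
  letI := Classical.decEq G
  have h := aux_sum_weight G p ((Finset.univ : Finset G).erase 0)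
    (Finset.notMem_erase _ _) ?_
  · rw [Nat.sub_self, pow_zero] at h
    rw [← h]
    refine Finset.sum_congr rfl fun Λ _ => ?_
    refine if_congr ?_ rfl rfl
    constructor
    · intro hΛ
      exact ⟨hΛ, fun g hg =>
        Finset.mem_erase.mpr ⟨fun h0 => hΛ.1 (h0 ▸ hg), Finset.mem_univ _⟩⟩
    · exact And.left
  · intro g hg
    rw [Finset.mem_erase] at hg ⊢
    exact ⟨fun h0 => hg.1 (neg_eq_zero.mp h0), Finset.mem_univ _⟩

lemma lambdaProb_add_compl (G : Type) [AddCommGroup G] [Fintype G] (p : ℝ)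
    (P : Finset G → Prop) :
    lambdaProb G p P + lambdaProb G p (fun Λ => ¬ P Λ) = 1 := by
  unfold lambdaProb
  rw [← Finset.sum_add_distrib, ← sum_weight_total G p]
  refine Finset.sum_congr rfl fun Λ _ => ?_
  by_cases h1 : IsSymmetricSubset Λ
  · by_cases h2 : P Λ <;> simp [h1, h2]
  · simp [h1]

open Classical in
lemma pair_lower (H : AddSubgroup G) :
    Fintype.card G ≤ (Finset.univ.filter (fun g => g ∈ H)).card +
      2 * (pairCount ((Finset.univ : Finset G).erase 0)
        - pairCount ((Finset.univ.filter (fun g => g ∈ H)).erase 0)) := by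
  letI := Classical.decEq G
  set f : G → Finset G := fun g => ({g, -g} : Finset G) with hf
  set C : Finset G := Finset.univ.filter (fun g : G => g ∈ H) with hC
  set T : Finset G := C.erase 0 with hT
  set U : Finset G := Finset.univ.filter (fun g : G => ¬ g ∈ H) with hU
  have hUC : C.card + U.card = Fintype.card G := by
    rw [hC, hU, Finset.card_filter_add_card_filter_not, Finset.card_univ]
  have hsub : T.image f ⊆ (Finset.univ.erase 0).image f := by
    apply Finset.image_subset_image
    intro g hg
    exact Finset.mem_erase.mpr ⟨(Finset.mem_erase.mp hg).1, Finset.mem_univ _⟩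
  have himg : U.image f ⊆ ((Finset.univ.erase 0).image f) \ (T.image f) := by
    intro P hP
    obtain ⟨g, hg, rfl⟩ := Finset.mem_image.mp hP
    rw [hU, Finset.mem_filter] at hg
    have hgH : g ∉ H := hg.2
    have hg0 : g ≠ 0 := fun h => hgH (h ▸ H.zero_mem)
    rw [Finset.mem_sdiff]
    constructor
    · exact Finset.mem_image_of_mem f (Finset.mem_erase.mpr ⟨hg0, Finset.mem_univ _⟩)
    · intro hmem
      obtain ⟨h, hh, heq⟩ := Finset.mem_image.mp hmem
      have hhH : h ∈ H := by
        have := Finset.mem_of_mem_erase (hT ▸ hh)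
        rw [hC, Finset.mem_filter] at this
        exact this.2
      have hgmem : g ∈ f h := by
        rw [heq]; exact mem_pair'.mpr (Or.inl rfl)
      rcases mem_pair'.mp hgmem with rfl | rfl
      · exact hgH hhH
      · exact hgH (neg_mem hhH)
  have hU2 : U.card ≤ 2 * (U.image f).card := by
    apply Finset.card_le_mul_card_image
    intro b hb
    obtain ⟨g, hg, rfl⟩ := Finset.mem_image.mp hb
    calc (U.filter (fun a => f a = f g)).card ≤ ({g, -g} : Finset G).card := by
          apply Finset.card_le_card
          intro a ha
          have h1 : f a = f g := (Finset.mem_filter.mp ha).2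
          have h2 : a ∈ f g := by rw [← h1]; exact mem_pair'.mpr (Or.inl rfl)
          exact h2
      _ ≤ 2 := (Finset.card_insert_le _ _).trans (by simp)
  have hcards : (U.image f).card ≤
      ((Finset.univ.erase 0).image f).card - (T.image f).card := by
    refine le_trans (Finset.card_le_card himg) (le_of_eq (Finset.card_sdiff_of_subset hsub))
  have hsc : (T.image f).card ≤ ((Finset.univ.erase 0).image f).card :=
    Finset.card_le_card hsub
  have e1 : pairCount ((Finset.univ : Finset G).erase 0)
      = ((Finset.univ.erase 0).image f).card := rfl
  have e2 : pairCount (C.erase 0) = (T.image f).card := rfl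
  rw [e1, e2]
  omega

lemma card_filter_mem (H : AddSubgroup G) [DecidablePred (· ∈ H)] :
    (Finset.univ.filter (fun g => g ∈ H)).card = Nat.card H := by
  rw [Nat.card_eq_fintype_card, Fintype.card_subtype]

lemma two_mul_card_le (H : AddSubgroup G) (hH : H ≠ ⊤) :
    2 * Nat.card H ≤ Fintype.card G := by
  have hdvd : Nat.card H ∣ Nat.card G := AddSubgroup.card_addSubgroup_dvd_card H
  have hne : Nat.card H ≠ Nat.card G := fun h => hH (AddSubgroup.eq_top_of_card_eq H h)
  haveI : Nonempty H := ⟨⟨0, H.zero_mem⟩⟩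
  have hpos : 0 < Nat.card H := Nat.card_pos
  have hposG : 0 < Nat.card G := Nat.card_pos
  obtain ⟨m, hm⟩ := hdvd
  have hm2 : 2 ≤ m := by
    rcases Nat.lt_or_ge m 2 with h | h
    · interval_cases m <;> omega
    · exact h
  have : 2 * Nat.card H ≤ Nat.card H * m := by nlinarith
  rw [← Nat.card_eq_fintype_card]
  omega

lemma card_strict_mono {K K' : AddSubgroup G} (h : K < K') : Nat.card K < Nat.card K' := by
  have h1 : ((K : Set G)).ncard < ((K' : Set G)).ncard :=
    Set.ncard_lt_ncard (SetLike.coe_ssubset_coe.mpr h) (Set.toFinite _)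
  rw [← Nat.card_coe_set_eq, ← Nat.card_coe_set_eq] at h1
  exact h1

lemma card_mono {K K' : AddSubgroup G} (h : K ≤ K') : Nat.card K ≤ Nat.card K' :=
  Nat.le_of_dvd (by haveI : Nonempty K' := ⟨⟨0, K'.zero_mem⟩⟩; exact Nat.card_pos)
    (AddSubgroup.card_dvd_of_le h)

lemma exists_small_gen_aux :
    ∀ n (H : AddSubgroup G), Nat.card H ≤ n →
      ∃ S : Finset G, AddSubgroup.closure (S : Set G) = H ∧ 2 ^ S.card ≤ Nat.card H := by
  classical
  intro n
  induction n with
  | zero =>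
    intro H h
    haveI : Nonempty H := ⟨⟨0, H.zero_mem⟩⟩
    have := Nat.card_pos (α := H)
    omega
  | succ n ih =>
    intro H hcard
    by_cases hbot : H = ⊥
    · refine ⟨∅, by simp [hbot, AddSubgroup.closure_empty], ?_⟩
      haveI : Nonempty H := ⟨⟨0, H.zero_mem⟩⟩
      simp only [Finset.card_empty, pow_zero]
      exact Nat.card_pos
    · haveI : Finite (AddSubgroup G) :=
        Finite.of_injective (SetLike.coe : AddSubgroup G → Set G) SetLike.coe_injective
      have hfin : ({K : AddSubgroup G | K < H}).Finite := Set.toFinite _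
      have hne : ({K : AddSubgroup G | K < H}).Nonempty := ⟨⊥, bot_lt_iff_ne_bot.mpr hbot⟩
      obtain ⟨K, hKs, hKmax⟩ :=
        Set.Finite.exists_maximalFor (fun K : AddSubgroup G => Nat.card K) _ hfin hne
      simp only [Set.mem_setOf_eq] at hKs
      obtain ⟨x, hxH, hxK⟩ := SetLike.exists_of_lt hKs
      set K' := K ⊔ AddSubgroup.closure {x} with hK'
      have hxK' : x ∈ K' := AddSubgroup.mem_sup_right (AddSubgroup.subset_closure rfl)
      have hK'le : K' ≤ H := sup_le hKs.le ((AddSubgroup.closure_le H).mpr (by simpa using hxH))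
      have hKK' : K < K' := lt_of_le_of_ne le_sup_left (fun h => hxK (h ▸ hxK'))
      have hK'H : K' = H := by
        by_contra h
        have hmem : K' ∈ {K : AddSubgroup G | K < H} := lt_of_le_of_ne hK'le h
        have := hKmax hmem (card_mono hKK'.le)
        exact absurd this (not_le.mpr (card_strict_mono hKK'))
      have hcKH : Nat.card K < Nat.card H := hK'H ▸ card_strict_mono hKK'
      obtain ⟨S', hS'cl, hS'card⟩ := ih K (by omega)
      refine ⟨insert x S', ?_, ?_⟩
      · rw [Finset.coe_insert, ← Set.singleton_union, AddSubgroup.closure_union, hS'cl,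
          sup_comm, ← hK', hK'H]
      · have h2KH : 2 * Nat.card K ≤ Nat.card H := by
          have hdvd : Nat.card K ∣ Nat.card H := AddSubgroup.card_dvd_of_le hKs.le
          haveI : Nonempty K := ⟨⟨0, K.zero_mem⟩⟩
          have hpos : 0 < Nat.card K := Nat.card_pos
          obtain ⟨m, hm⟩ := hdvd
          have hm2 : 2 ≤ m := by
            rcases Nat.lt_or_ge m 2 with h | h
            · interval_cases m <;> omega
            · exact h
          nlinarith
        calc 2 ^ (insert x S').card ≤ 2 ^ (S'.card + 1) :=
              Nat.pow_le_pow_right (by norm_num) (Finset.card_insert_le _ _)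
          _ = 2 * 2 ^ S'.card := by ring
          _ ≤ 2 * Nat.card K := by omega
          _ ≤ Nat.card H := h2KH

lemma exists_small_gen (H : AddSubgroup G) :
    ∃ S : Finset G, AddSubgroup.closure (S : Set G) = H ∧
      S.card ≤ Nat.log 2 (Fintype.card G) := by
  obtain ⟨S, hcl, hcard⟩ := exists_small_gen_aux (Nat.card H) H le_rfl
  refine ⟨S, hcl, ?_⟩
  have h1 : Nat.card H ≤ Fintype.card G := by
    rw [← Nat.card_eq_fintype_card]
    exact Nat.card_le_card_of_injective _ Subtype.val_injective
  have h2 : 2 ^ S.card ≤ Fintype.card G := hcard.trans h1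
  exact (Nat.le_log_iff_pow_le one_lt_two Fintype.card_ne_zero).mpr h2

lemma card_addSubgroup_le :
    Nat.card (AddSubgroup G) ≤
      (Fintype.card G + 1) ^ (Nat.log 2 (Fintype.card G)) := by
  classical
  set L := Nat.log 2 (Fintype.card G) with hL
  choose S hcl hcard using fun H : AddSubgroup G => exists_small_gen H
  have hcard' : ∀ H : AddSubgroup G, (S H).card ≤ L := fun H => by rw [hL]; exact hcard H
  have hinj : Function.Injective
      (fun H : AddSubgroup G => (fun i : Fin L => (S H).toList[(i : ℕ)]?)) := by
    intro H1 H2 h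
    have hl : (S H1).toList = (S H2).toList := by
      apply List.ext_getElem?
      intro i
      by_cases hi : i < L
      · exact congrFun h ⟨i, hi⟩
      · have e1 : (S H1).toList[i]? = none := List.getElem?_eq_none
          (by rw [Finset.length_toList]; exact le_trans (hcard' H1) (by omega))
        have e2 : (S H2).toList[i]? = none := List.getElem?_eq_none
          (by rw [Finset.length_toList]; exact le_trans (hcard' H2) (by omega))
        rw [e1, e2]
    have hS : S H1 = S H2 := by
      rw [← Finset.toList_toFinset (S H1), hl, Finset.toList_toFinset]
    rw [← hcl H1, hS, hcl H2]
  calc Nat.card (AddSubgroup G) ≤ Nat.card (Fin L → Option G) :=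
        Nat.card_le_card_of_injective _ hinj
    _ = (Fintype.card G + 1) ^ L := by
        rw [Nat.card_eq_fintype_card]
        simp [Fintype.card_option]

lemma perH_bound (k : ℝ) (p : ℝ) (hp0 : 0 < p) (hp1 : p < 1) (hk3 : (3:ℝ) ≤ k)
    (hmin : 10 ^ 3 * Real.log k ^ ((1 : ℝ) / 2) * k ^ (-(1 : ℝ) / 5) ≤ min p (1 - p))
    (m c : ℕ) (hmc : k ≤ (c : ℝ) + 2 * m) (hc : 2 * (c : ℝ) ≤ k) :
    (1 - p) ^ m ≤ Real.exp (-(250 * k ^ ((4 : ℝ) / 5))) := by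
  have hk0 : (0:ℝ) < k := by linarith
  have hm4 : k / 4 ≤ (m : ℝ) := by linarith
  have hlog1 : 1 ≤ Real.log k := by
    rw [Real.le_log_iff_exp_le hk0]
    calc Real.exp 1 ≤ 2.7182818286 := Real.exp_one_lt_d9.le
    _ ≤ k := by linarith
  have hrp : 1 ≤ Real.log k ^ ((1:ℝ)/2) := Real.one_le_rpow hlog1 (by norm_num)
  have hkpow : (0:ℝ) < k ^ (-(1:ℝ)/5) := Real.rpow_pos_of_pos hk0 _
  have hplb : 1000 * k ^ (-(1:ℝ)/5) ≤ p := by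
    calc 1000 * k ^ (-(1:ℝ)/5) = 10 ^ 3 * 1 * k ^ (-(1:ℝ)/5) := by norm_num
    _ ≤ 10 ^ 3 * Real.log k ^ ((1:ℝ)/2) * k ^ (-(1:ℝ)/5) := by
        apply mul_le_mul_of_nonneg_right _ hkpow.le
        nlinarith
    _ ≤ min p (1 - p) := hmin
    _ ≤ p := min_le_left _ _
  have hpow2 : k ^ (-(1:ℝ)/5) * k = k ^ (-(1:ℝ)/5 + 1) := by
    rw [Real.rpow_add hk0, Real.rpow_one]
  have hpow : k ^ (-(1:ℝ)/5 + 1) = k ^ ((4:ℝ)/5) := by norm_num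
  have hmul : 1000 * k ^ (-(1:ℝ)/5) * (k / 4) ≤ p * (m : ℝ) :=
    mul_le_mul hplb hm4 (by positivity) hp0.le
  have hpm : 250 * k ^ ((4:ℝ)/5) ≤ p * (m : ℝ) := by
    have he : 1000 * k ^ (-(1:ℝ)/5) * (k / 4) = 250 * (k ^ (-(1:ℝ)/5) * k) := by ring
    rw [he, hpow2, hpow] at hmul
    exact hmul
  have h1p : (0:ℝ) ≤ 1 - p := by linarith
  have hle : 1 - p ≤ Real.exp (-p) := by linarith [Real.add_one_le_exp (-p)]
  calc (1 - p) ^ m ≤ Real.exp (-p) ^ m := pow_le_pow_left₀ h1p hle m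
  _ = Real.exp ((m : ℝ) * -p) := (Real.exp_nat_mul _ m).symm
  _ ≤ Real.exp (-(250 * k ^ ((4:ℝ)/5))) := by
      apply Real.exp_le_exp.mpr
      nlinarith

lemma final_num (k : ℕ) (hk3 : 3 ≤ k) :
    ((k + 1 : ℕ) : ℝ) ^ (Nat.log 2 k) * Real.exp (-(250 * (k:ℝ) ^ ((4:ℝ)/5)))
      ≤ Real.exp (-((k:ℝ) ^ ((1:ℝ)/2))) := by
  set L := Nat.log 2 k with hLdef
  set x := (k : ℝ) with hxdef
  have hx3 : (3:ℝ) ≤ x := by rw [hxdef]; exact_mod_cast hk3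
  have hx0 : (0:ℝ) < x := by linarith
  have hx1 : (1:ℝ) ≤ x := by linarith
  have hlog0 : 0 ≤ Real.log x := Real.log_nonneg hx1
  have hL : (L:ℝ) * Real.log 2 ≤ Real.log x := by
    have h1 : (2:ℕ) ^ L ≤ k := Nat.pow_log_le_self 2 (by omega)
    have h2 : ((2:ℝ)) ^ L ≤ x := by rw [hxdef]; exact_mod_cast h1
    have h3 := Real.log_le_log (by positivity) h2
    rwa [Real.log_pow] at h3
  have hlog2 : (1:ℝ)/2 ≤ Real.log 2 := by linarith [Real.log_two_gt_d9]
  have hLle : (L:ℝ) ≤ 2 * Real.log x := by nlinarith [Nat.cast_nonneg (α := ℝ) L]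
  have hlogk1 : Real.log (x + 1) ≤ 2 * Real.log x := by
    have h1 : x + 1 ≤ x ^ 2 := by nlinarith
    have h2 := Real.log_le_log (by positivity) h1
    rw [Real.log_pow] at h2
    push_cast at h2
    linarith
  have hlog1p : 0 ≤ Real.log (x + 1) := Real.log_nonneg (by linarith)
  have hsq : Real.log x ≤ (5/2) * x ^ ((2:ℝ)/5) := by
    have h0 : (0:ℝ) < x ^ ((2:ℝ)/5) := Real.rpow_pos_of_pos hx0 _
    have h1 : Real.log (x ^ ((2:ℝ)/5)) ≤ x ^ ((2:ℝ)/5) - 1 := Real.log_le_sub_one_of_pos h0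
    rw [Real.log_rpow hx0] at h1
    nlinarith
  have hsq2 : (Real.log x) ^ 2 ≤ (25/4) * x ^ ((4:ℝ)/5) := by
    have h2 : x ^ ((2:ℝ)/5) * x ^ ((2:ℝ)/5) = x ^ ((4:ℝ)/5) := by
      rw [← Real.rpow_add hx0]; norm_num
    nlinarith [Real.rpow_pos_of_pos hx0 ((2:ℝ)/5)]
  have hhalf : x ^ ((1:ℝ)/2) ≤ x ^ ((4:ℝ)/5) :=
    Real.rpow_le_rpow_of_exponent_le hx1 (by norm_num)
  have hLlog : (L:ℝ) * Real.log (x + 1) ≤ 4 * (Real.log x) ^ 2 := by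
    calc (L:ℝ) * Real.log (x + 1) ≤ (2 * Real.log x) * (2 * Real.log x) :=
          mul_le_mul hLle hlogk1 hlog1p (by positivity)
    _ = 4 * (Real.log x) ^ 2 := by ring
  have hx1p : (0:ℝ) < x + 1 := by linarith
  have hcast : ((k + 1 : ℕ) : ℝ) = x + 1 := by push_cast; ring
  rw [hcast, ← Real.exp_log hx1p, ← Real.exp_nat_mul, ← Real.exp_add]
  apply Real.exp_le_exp.mpr
  nlinarith [Real.rpow_pos_of_pos hx0 ((4:ℝ)/5)]

lemma eventually_small (ε : ℝ) (hε : 0 < ε) :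
    ∃ N : ℕ, ∀ k : ℕ, N ≤ k → Real.exp (-((k:ℝ) ^ ((1:ℝ)/2))) < ε := by
  have h1 : Filter.Tendsto (fun k : ℕ => ((k:ℝ) ^ ((1:ℝ)/2))) Filter.atTop Filter.atTop :=
    (tendsto_rpow_atTop (by norm_num)).comp tendsto_natCast_atTop_atTop
  have h2 : Filter.Tendsto (fun k : ℕ => Real.exp (-((k:ℝ) ^ ((1:ℝ)/2)))) Filter.atTop (nhds 0) :=
    Real.tendsto_exp_atBot.comp (Filter.tendsto_neg_atTop_atBot.comp h1)
  have h3 := h2.eventually_lt_const hε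
  exact Filter.eventually_atTop.mp h3

end Statement4Aux


/-- If `min(p, 1-p) ≥ 10³ (log k̃)^{1/2} k̃^{-1/5}`, then with
probability `1 - o(1)` the random symmetric set `Λ` generates the group `G`. -/
theorem statement4 :
    ∀ ε : ℝ, 0 < ε →
      ∃ N : ℕ, ∀ (G : Type) [AddCommGroup G] [Fintype G] (p : ℝ),
        N ≤ Fintype.card G → 0 < p → p < 1 →
        10 ^ 3 * Real.log (Fintype.card G) ^ ((1 : ℝ) / 2) *
            (Fintype.card G : ℝ) ^ (-(1 : ℝ) / 5) ≤ min p (1 - p) →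
        1 - ε ≤ lambdaProb G p (fun Λ =>
          AddSubgroup.closure (Λ : Set G) = ⊤) := by
  intro ε hε
  obtain ⟨N₀, hN₀⟩ := eventually_small ε hε
  refine ⟨max N₀ 3, ?_⟩
  intro G _ _ p hN hp0 hp1 hmin
  classical
  set k := Fintype.card G with hk
  have hk3 : 3 ≤ k := le_trans (le_max_right _ _) hN
  have hkN0 : N₀ ≤ k := le_trans (le_max_left _ _) hN
  haveI : Finite (AddSubgroup G) :=
    Finite.of_injective (SetLike.coe : AddSubgroup G → Set G) SetLike.coe_injective
  haveI : Fintype (AddSubgroup G) := Fintype.ofFinite _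
  have hw : ∀ Λ : Finset G, 0 ≤ lambdaWeight p Λ := fun Λ =>
    mul_nonneg (pow_nonneg hp0.le _) (pow_nonneg (by linarith) _)
  set E : ℝ := Real.exp (-(250 * (k : ℝ) ^ ((4:ℝ)/5))) with hE
  have hfail : lambdaProb G p (fun Λ => ¬ AddSubgroup.closure (Λ : Set G) = ⊤) ≤ ε := by
    have hub : lambdaProb G p (fun Λ => ¬ AddSubgroup.closure (Λ : Set G) = ⊤)
        ≤ ∑ H ∈ Finset.univ.filter (fun H : AddSubgroup G => H ≠ ⊤),
            ∑ Λ : Finset G,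
              (if IsSymmetricSubset Λ ∧ Λ ⊆ (Finset.univ.filter (fun g => g ∈ H)).erase 0
               then lambdaWeight p Λ else 0) := by
      rw [Finset.sum_comm]
      unfold lambdaProb
      apply Finset.sum_le_sum
      intro Λ _
      by_cases hc : IsSymmetricSubset Λ ∧ ¬ AddSubgroup.closure (Λ : Set G) = ⊤
      · rw [if_pos hc]
        have hHmem : AddSubgroup.closure (Λ : Set G) ∈
            Finset.univ.filter (fun H : AddSubgroup G => H ≠ ⊤) :=
          Finset.mem_filter.mpr ⟨Finset.mem_univ _, hc.2⟩
        have hsubT : Λ ⊆ (Finset.univ.filter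
            (fun g => g ∈ AddSubgroup.closure (Λ : Set G))).erase 0 := by
          intro g hg
          exact Finset.mem_erase.mpr ⟨fun h0 => hc.1.1 (h0 ▸ hg),
            Finset.mem_filter.mpr ⟨Finset.mem_univ _, AddSubgroup.subset_closure hg⟩⟩
        calc lambdaWeight p Λ
            = (if IsSymmetricSubset Λ ∧ Λ ⊆ (Finset.univ.filter
                (fun g => g ∈ AddSubgroup.closure (Λ : Set G))).erase 0
               then lambdaWeight p Λ else 0) := (if_pos ⟨hc.1, hsubT⟩).symm
          _ ≤ _ := Finset.single_le_sum
              (f := fun H : AddSubgroup G => if IsSymmetricSubset Λ ∧ Λ ⊆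
                  (Finset.univ.filter (fun g => g ∈ H)).erase 0
                then lambdaWeight p Λ else 0)
              (fun H _ => by
                split
                · exact hw Λ
                · exact le_rfl) hHmem
      · rw [if_neg hc]
        exact Finset.sum_nonneg fun H _ => by
          split
          · exact hw Λ
          · exact le_rfl
    have hper : ∀ H ∈ Finset.univ.filter (fun H : AddSubgroup G => H ≠ ⊤),
        ∑ Λ : Finset G, (if IsSymmetricSubset Λ ∧
            Λ ⊆ (Finset.univ.filter (fun g => g ∈ H)).erase 0
          then lambdaWeight p Λ else 0) ≤ E := by
      intro H hH
      have hHne : H ≠ ⊤ := (Finset.mem_filter.mp hH).2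
      have hneg : ∀ g ∈ (Finset.univ.filter (fun g : G => g ∈ H)).erase 0,
          -g ∈ (Finset.univ.filter (fun g : G => g ∈ H)).erase 0 := by
        intro g hg
        rw [Finset.mem_erase, Finset.mem_filter] at hg ⊢
        exact ⟨fun h0 => hg.1 (neg_eq_zero.mp h0), Finset.mem_univ _, neg_mem hg.2.2⟩
      rw [aux_sum_weight G p _ (Finset.notMem_erase _ _) hneg]
      have hmc := pair_lower (G := G) H
      have hc2 : 2 * (Finset.univ.filter (fun g : G => g ∈ H)).card ≤ k := by
        rw [card_filter_mem H]
        exact two_mul_card_le H hHne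
      have hmcR : (k : ℝ) ≤ ((Finset.univ.filter (fun g : G => g ∈ H)).card : ℝ)
          + 2 * (((pairCount ((Finset.univ : Finset G).erase 0)
            - pairCount ((Finset.univ.filter (fun g : G => g ∈ H)).erase 0) : ℕ)) : ℝ) := by
        exact_mod_cast hmc
      have hc2R : 2 * ((Finset.univ.filter (fun g : G => g ∈ H)).card : ℝ) ≤ (k : ℝ) := by
        exact_mod_cast hc2
      rw [hE]
      exact perH_bound (k : ℝ) p hp0 hp1 (by exact_mod_cast hk3) hmin _ _ hmcR hc2R
    have hsum := Finset.sum_le_card_nsmul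
      (Finset.univ.filter (fun H : AddSubgroup G => H ≠ ⊤)) _ E hper
    rw [nsmul_eq_mul] at hsum
    have hEpos : 0 < E := Real.exp_pos _
    have hcount : (((Finset.univ.filter (fun H : AddSubgroup G => H ≠ ⊤)).card : ℕ) : ℝ)
        ≤ (((k + 1) ^ (Nat.log 2 k) : ℕ) : ℝ) := by
      have h1 : (Finset.univ.filter (fun H : AddSubgroup G => H ≠ ⊤)).card
          ≤ (k + 1) ^ (Nat.log 2 k) := by
        calc (Finset.univ.filter (fun H : AddSubgroup G => H ≠ ⊤)).card
            ≤ Fintype.card (AddSubgroup G) := by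
              rw [← Finset.card_univ]
              exact Finset.card_filter_le _ _
          _ = Nat.card (AddSubgroup G) := Nat.card_eq_fintype_card.symm
          _ ≤ (k + 1) ^ (Nat.log 2 k) := card_addSubgroup_le
      exact_mod_cast h1
    have hfin : (((k + 1) ^ (Nat.log 2 k) : ℕ) : ℝ) * E
        ≤ Real.exp (-((k : ℝ) ^ ((1:ℝ)/2))) := by
      rw [hE]
      have h := final_num k hk3
      have hcast : (((k + 1) ^ (Nat.log 2 k) : ℕ) : ℝ) = ((k + 1 : ℕ) : ℝ) ^ (Nat.log 2 k) := by
        push_cast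
        ring
      rw [hcast]
      exact h
    have hεk : Real.exp (-((k : ℝ) ^ ((1:ℝ)/2))) < ε := hN₀ k hkN0
    have : lambdaProb G p (fun Λ => ¬ AddSubgroup.closure (Λ : Set G) = ⊤)
        ≤ (((k + 1) ^ (Nat.log 2 k) : ℕ) : ℝ) * E :=
      le_trans (le_trans hub hsum) (mul_le_mul_of_nonneg_right hcount hEpos.le)
    linarith
  have htot := lambdaProb_add_compl G p (fun Λ => AddSubgroup.closure (Λ : Set G) = ⊤)
  linarith
end

section
/- Let H̃ be a (q₀,δ₀)-typical Cayley graph of an abelian group of size k̃, and suppose 0<q<1/2 and 0<δ<1 satisfy q ≤ q₀ − (log k̃)/(4k̃), δ ≤ δ₀ − (log k̃)/(4k̃), and q₀ ≥ 4·k̃^{−1/5} + (log k̃)/(4k̃). Then every induced subgraph H of H̃ on at least k̃ − (1/4)·log k̃ vertices is a (q,δ)-reasonable induced subgraph of H̃. -/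
universe u v

open Filter

set_option maxHeartbeats 2000000 in
/-- If `H̃` is a `(q₀, δ₀)`-typical Cayley graph of an abelian group of
size `k̃`, and `q ≤ q₀ - (log k̃)/(4k̃)`, `δ ≤ δ₀ - (log k̃)/(4k̃)`,
`q₀ ≥ 4 k̃^{-1/5} + (log k̃)/(4k̃)`, then every induced subgraph of `H̃` on at least
`k̃ - (1/4) log k̃` vertices is `(q, δ)`-reasonable. -/
theorem statement6 {G : Type} [AddCommGroup G] [Fintype G] (Λ : Set G) (q₀ δ₀ q δ : ℝ)
    (hq₀0 : 0 < q₀) (hq₀1 : q₀ < 1 / 2) (hδ₀0 : 0 < δ₀) (hδ₀1 : δ₀ < 1)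
    (htyp : IsTypical Λ q₀ δ₀)
    (hq0 : 0 < q) (hq1 : q < 1 / 2) (hδ0 : 0 < δ) (hδ1 : δ < 1)
    (hq : q ≤ q₀ - Real.log (Fintype.card G) / (4 * (Fintype.card G : ℝ)))
    (hδ : δ ≤ δ₀ - Real.log (Fintype.card G) / (4 * (Fintype.card G : ℝ)))
    (hq₀ : 4 * (Fintype.card G : ℝ) ^ (-(1 : ℝ) / 5) +
        Real.log (Fintype.card G) / (4 * (Fintype.card G : ℝ)) ≤ q₀)
    (K : Set G)
    (hK : (Fintype.card G : ℝ) - Real.log (Fintype.card G) / 4 ≤ (Nat.card K : ℝ)) :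
    IsReasonable Λ K q δ := by
  classical
  set H := cayleyGraph G Λ with hH
  set n := Fintype.card G with hn
  have hn1 : 1 ≤ n := Fintype.card_pos
  have hnR : (0:ℝ) < (n:ℝ) := by exact_mod_cast hn1
  have hlog : 0 ≤ Real.log n := Real.log_nonneg (by exact_mod_cast hn1)
  have hdiv : Real.log n / (4 * (n:ℝ)) * n = Real.log n / 4 := by
    field_simp
  have hKcard : (Nat.card K : ℝ) = (K.ncard : ℝ) := by
    rw [Nat.card_coe_set_eq]
  have hKn : (K.ncard : ℝ) ≤ (n:ℝ) := by
    have h := Set.ncard_le_ncard (Set.subset_univ K) (Set.toFinite _)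
    rw [Set.ncard_univ, Nat.card_eq_fintype_card] at h
    exact_mod_cast h
  rw [hKcard] at hK
  have hKc : ((Kᶜ).ncard : ℝ) ≤ Real.log n / 4 := by
    have h := Set.ncard_add_ncard_compl K
    rw [Nat.card_eq_fintype_card] at h
    have h' : (K.ncard:ℝ) + ((Kᶜ).ncard:ℝ) = (n:ℝ) := by exact_mod_cast h
    linarith
  have hpow : (n:ℝ) ^ ((4:ℝ)/5) = (n:ℝ) ^ (-(1:ℝ)/5) * (n:ℝ) ^ (1:ℝ) := by
    rw [← Real.rpow_add hnR]; norm_num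
  rw [Real.rpow_one] at hpow
  have hpownn : (0:ℝ) ≤ (n:ℝ) ^ ((4:ℝ)/5) := Real.rpow_nonneg hnR.le _
  have hq₀n : 4 * (n:ℝ)^((4:ℝ)/5) + Real.log n / 4 ≤ q₀ * n := by
    have h := mul_le_mul_of_nonneg_right hq₀ hnR.le
    nlinarith [h, hpow, hdiv]
  refine ⟨?_, ?_, ?_⟩
  · -- primeness
    rintro ⟨U, hU2, hUlt, hUmod⟩
    set U' : Set G := Subtype.val '' U with hU'def
    have hU'K : U' ⊆ K := by rintro _ ⟨x, -, rfl⟩; exact x.2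
    have hU'card : U'.ncard = Nat.card U := by
      rw [Nat.card_coe_set_eq, hU'def,
        Set.ncard_image_of_injective _ Subtype.val_injective]
    have hU'2 : 1 < U'.ncard := by omega
    obtain ⟨v, w, hvU, hwU, hvw⟩ := (Set.one_lt_ncard_iff (Set.toFinite _)).mp hU'2
    have hS := htyp.2.1 v w hvw
    rw [Nat.card_coe_set_eq] at hS
    set S : Set G := {u : G | u ≠ v ∧ u ≠ w ∧ Xor' (H.Adj u v) (H.Adj u w)} with hSdef
    obtain ⟨v', hv'U, hv'⟩ := hvU
    obtain ⟨w', hw'U, hw'⟩ := hwU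
    have hSsub : S ⊆ U' ∪ Kᶜ := by
      intro u hu
      by_cases huK : u ∈ K
      · by_cases huU : u ∈ U'
        · exact Or.inl huU
        · exfalso
          have hx : (⟨u, huK⟩ : ↥K) ∉ U := fun h => huU ⟨_, h, rfl⟩
          rcases hUmod ⟨u, huK⟩ hx with hc | ha
          · have h1 : H.Adj u v := by
              have h0 : H.Adj u (v' : G) := hc v' hv'U
              rwa [hv'] at h0
            have h2 : H.Adj u w := by
              have h0 : H.Adj u (w' : G) := hc w' hw'U
              rwa [hw'] at h0
            rcases hu.2.2 with ⟨-, hb⟩ | ⟨-, hb⟩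
            · exact hb h2
            · exact hb h1
          · have h1 : ¬ H.Adj u v := by
              have h0 : ¬ H.Adj u (v' : G) := ha v' hv'U
              rwa [hv'] at h0
            have h2 : ¬ H.Adj u w := by
              have h0 : ¬ H.Adj u (w' : G) := ha w' hw'U
              rwa [hw'] at h0
            rcases hu.2.2 with ⟨hb, -⟩ | ⟨hb, -⟩
            · exact h1 hb
            · exact h2 hb
      · exact Or.inr huK
    have hScard : (S.ncard : ℝ) ≤ (U'.ncard : ℝ) + Real.log n / 4 := by
      have h1 : S.ncard ≤ U'.ncard + (Kᶜ).ncard :=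
        le_trans (Set.ncard_le_ncard hSsub (Set.toFinite _)) (Set.ncard_union_le _ _)
      have h1' : (S.ncard:ℝ) ≤ (U'.ncard:ℝ) + ((Kᶜ).ncard:ℝ) := by exact_mod_cast h1
      linarith
    have hU'big : 4 * (n:ℝ)^((4:ℝ)/5) ≤ (U'.ncard:ℝ) := by linarith
    set X : Set G := {u : G | ∃ h : u ∈ K, (⟨u, h⟩ : ↥K) ∉ U ∧ ∀ y ∈ U, H.Adj u ↑y}
      with hXdef
    set Y : Set G := {u : G | ∃ h : u ∈ K, (⟨u, h⟩ : ↥K) ∉ U ∧ ∀ y ∈ U, ¬ H.Adj u ↑y}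
      with hYdef
    have hXU' : Disjoint X U' := by
      rw [Set.disjoint_left]
      rintro u ⟨h, hnotU, -⟩ ⟨x, hxU, hxval⟩
      exact hnotU (by rwa [show (⟨u,h⟩ : ↥K) = x from Subtype.ext hxval.symm])
    have hYU' : Disjoint Y U' := by
      rw [Set.disjoint_left]
      rintro u ⟨h, hnotU, -⟩ ⟨x, hxU, hxval⟩
      exact hnotU (by rwa [show (⟨u,h⟩ : ↥K) = x from Subtype.ext hxval.symm])
    have hU'half : 2 * (n:ℝ)^((4:ℝ)/5) ≤ (Nat.card U' : ℝ) := by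
      rw [Nat.card_coe_set_eq]; linarith
    have hXsmall : (X.ncard : ℝ) < 2 * (n:ℝ)^((4:ℝ)/5) := by
      by_contra hcon
      push_neg at hcon
      refine htyp.2.2.1 ⟨X, U', hXU', ?_, hU'half, Or.inl ?_⟩
      · rw [Nat.card_coe_set_eq]; linarith
      · rintro x ⟨hxK, -, hall⟩ y ⟨y', hy'U, rfl⟩
        exact hall y' hy'U
    have hYsmall : (Y.ncard : ℝ) < 2 * (n:ℝ)^((4:ℝ)/5) := by
      by_contra hcon
      push_neg at hcon
      refine htyp.2.2.1 ⟨Y, U', hYU', ?_, hU'half, Or.inr ?_⟩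
      · rw [Nat.card_coe_set_eq]; linarith
      · rintro x ⟨hxK, -, hall⟩ y ⟨y', hy'U, rfl⟩
        exact hall y' hy'U
    have hKdiff : K \ U' ⊆ X ∪ Y := by
      rintro u ⟨huK, huU⟩
      have hx : (⟨u, huK⟩ : ↥K) ∉ U := fun h => huU ⟨_, h, rfl⟩
      rcases hUmod ⟨u, huK⟩ hx with hc | ha
      · exact Or.inl ⟨huK, hx, fun y hy => hc y hy⟩
      · exact Or.inr ⟨huK, hx, fun y hy => ha y hy⟩
    have hdiffcard : ((K \ U').ncard : ℝ) < 4 * (n:ℝ)^((4:ℝ)/5) := by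
      have h1 : (K \ U').ncard ≤ X.ncard + Y.ncard :=
        le_trans (Set.ncard_le_ncard hKdiff (Set.toFinite _)) (Set.ncard_union_le _ _)
      have h1' : ((K \ U').ncard:ℝ) ≤ (X.ncard:ℝ) + (Y.ncard:ℝ) := by exact_mod_cast h1
      linarith
    have hsplit : ((K \ U').ncard : ℝ) + (U'.ncard : ℝ) = (K.ncard : ℝ) := by
      exact_mod_cast Set.ncard_diff_add_ncard_of_subset hU'K (Set.toFinite _)
    have hU'huge : (1 - q₀) * n < (U'.ncard : ℝ) := by linarith [hq₀n, hK, hsplit, hdiffcard]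
    have hne : (K \ U').Nonempty := by
      rw [Set.nonempty_iff_ne_empty]
      intro h
      have hsub : K ⊆ U' := Set.diff_eq_empty.mp h
      have h2 : K.ncard ≤ U'.ncard := Set.ncard_le_ncard hsub (Set.toFinite _)
      have h3 : U'.ncard < K.ncard := by
        rw [hU'card, ← Nat.card_coe_set_eq K]
        exact hUlt
      omega
    obtain ⟨u, huK, huU⟩ := hne
    have hx : (⟨u, huK⟩ : ↥K) ∉ U := fun h => huU ⟨_, h, rfl⟩
    have hdeg := htyp.1 u
    rw [Nat.card_coe_set_eq] at hdeg
    rcases hUmod ⟨u, huK⟩ hx with hc | ha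
    · have hsub : U' ⊆ H.neighborSet u := by
        rintro _ ⟨y, hyU, rfl⟩
        exact hc y hyU
      have h1 : (U'.ncard : ℝ) ≤ ((H.neighborSet u).ncard : ℝ) := by
        exact_mod_cast Set.ncard_le_ncard hsub (Set.toFinite _)
      linarith [hdeg.2]
    · have hsub : H.neighborSet u ⊆ U'ᶜ := by
        intro y hy
        rintro ⟨y', hy'U, rfl⟩
        exact ha y' hy'U hy
      have h2 : (H.neighborSet u).ncard ≤ (U'ᶜ).ncard :=
        Set.ncard_le_ncard hsub (Set.toFinite _)
      have h3 := Set.ncard_add_ncard_compl U'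
      rw [Nat.card_eq_fintype_card] at h3
      have h3' : (U'.ncard:ℝ) + ((U'ᶜ).ncard:ℝ) = (n:ℝ) := by exact_mod_cast h3
      have h2' : ((H.neighborSet u).ncard:ℝ) ≤ ((U'ᶜ).ncard:ℝ) := by exact_mod_cast h2
      linarith [hdeg.1, h2', h3', hU'huge]
  · -- distinguishing pairs within K
    intro v w hvw
    have hS := htyp.2.1 v w hvw
    rw [Nat.card_coe_set_eq] at hS
    rw [Nat.card_coe_set_eq, Nat.card_coe_set_eq]
    set S : Set G := {u : G | u ≠ v ∧ u ≠ w ∧ Xor' (H.Adj u v) (H.Adj u w)} with hSdef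
    set T : Set G := {u : G | u ∈ K ∧ u ≠ v ∧ u ≠ w ∧ Xor' (H.Adj u v) (H.Adj u w)}
      with hTdef
    have hsub : S ⊆ T ∪ Kᶜ := by
      intro u hu
      by_cases huK : u ∈ K
      · exact Or.inl ⟨huK, hu⟩
      · exact Or.inr huK
    have h1 : S.ncard ≤ T.ncard + (Kᶜ).ncard :=
      le_trans (Set.ncard_le_ncard hsub (Set.toFinite _)) (Set.ncard_union_le _ _)
    have h1' : (S.ncard:ℝ) ≤ (T.ncard:ℝ) + ((Kᶜ).ncard:ℝ) := by exact_mod_cast h1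
    have hqn : q * (n:ℝ) ≤ q₀ * n - Real.log n / 4 := by
      have h := mul_le_mul_of_nonneg_right hq hnR.le
      nlinarith [h, hdiv]
    have hqK : q * (K.ncard:ℝ) ≤ q * n := by nlinarith [hKn, hq0.le]
    linarith
  · -- rigidity
    intro X f hX hinj hadj
    apply htyp.2.2.2 X f ?_ hinj hadj
    rw [hKcard] at hX
    have hδn : δ * (n:ℝ) ≤ δ₀ * n - Real.log n / 4 := by
      have h := mul_le_mul_of_nonneg_right hδ hnR.le
      nlinarith [h, hdiv]
    have h1 : (1 - δ) * (n:ℝ) - Real.log n / 4 ≤ (1 - δ) * (K.ncard:ℝ) := by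
      nlinarith [mul_le_mul_of_nonneg_left hK (by linarith : (0:ℝ) ≤ 1 - δ)]
    linarith
end

section
/- Let H be a (q,δ)-reasonable induced subgraph of a Cayley graph H̃ of an abelian group (for some 0<q<1/2 and 0<δ<1). If Γ is a blow-up of H̃ with parts W_i for i ∈ V(H̃), then every embedding H ↪ Γ either maps all of V(H) into a single part W_i, or there exists a rotation or reflection φ of H̃ such that each vertex x ∈ V(H) is mapped into W_{φ(x)}. -/
universe u v

open Filter

/-- Let `H` be a `(q, δ)`-reasonable induced subgraph of a Cayley graph
`H̃` and let `Γ` be a blow-up of `H̃` with parts `W i`. Then every embedding `H ↪ Γ`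
either maps all of `V(H)` into a single part, or there is a rotation or reflection `φ`
of `H̃` such that every `x ∈ V(H)` is mapped into `W (φ x)`. -/
theorem statement8 {G : Type} [AddCommGroup G] [Fintype G] (Λ : Set G)
    (K : Set G) (q δ : ℝ) (hq0 : 0 < q) (hq1 : q < 1 / 2) (hδ0 : 0 < δ) (hδ1 : δ < 1)
    (hK : (Fintype.card G : ℝ) - Real.log (Fintype.card G) / 4 ≤ (Nat.card K : ℝ))
    (hreas : IsReasonable Λ K q δ)
    {β : Type} [Fintype β] (Γ : SimpleGraph β) (W : G → Set β)
    (hblow : IsBlowupWith (cayleyGraph G Λ) Γ W)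
    (θ : (cayleyGraph G Λ).induce K ↪g Γ) :
    (∃ i : G, ∀ x : K, θ x ∈ W i) ∨
      ∃ φ : G → G, IsRotOrRefl φ ∧ ∀ x : K, θ x ∈ W (φ ↑x) := by
  classical
  obtain ⟨hprime, hmid, hrigid⟩ := hreas
  obtain ⟨hW1, hW2, hW3⟩ := hblow
  have hι : ∀ x : K, ∃! i, θ x ∈ W i := fun x => hW2 (θ x)
  set ι : K → G := fun x => (hι x).choose with hιdef
  have hιmem : ∀ x : K, θ x ∈ W (ι x) := fun x => (hι x).choose_spec.1
  have hadj : ∀ x y : K, ι x ≠ ι y →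
      (Γ.Adj (θ x) (θ y) ↔ (cayleyGraph G Λ).Adj (ι x) (ι y)) :=
    fun x y h => hW3 _ _ h _ (hιmem x) _ (hιmem y)
  have hθadj : ∀ x y : K, Γ.Adj (θ x) (θ y) ↔ (cayleyGraph G Λ).Adj ↑x ↑y := by
    intro x y
    rw [θ.map_adj_iff]
    rfl
  by_cases hconst : ∀ x y : K, ι x = ι y
  · left
    by_cases hne : Nonempty K
    · exact ⟨ι hne.some, fun x => (hconst x hne.some) ▸ hιmem x⟩
    · exact ⟨0, fun x => absurd ⟨x⟩ hne⟩
  · push_neg at hconst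
    obtain ⟨x0, y0, hxy0⟩ := hconst
    have hinj : Function.Injective ι := by
      intro a b hab
      by_contra hne
      apply hprime
      refine ⟨{z : K | ι z = ι a}, ?_, ?_, ?_⟩
      · have hsub : ({a, b} : Set K) ⊆ {z : K | ι z = ι a} := by
          rintro z (rfl | rfl)
          · rfl
          · exact hab.symm
        calc (2 : ℕ) = ({a, b} : Set K).ncard := (Set.ncard_pair hne).symm
          _ ≤ ({z : K | ι z = ι a}).ncard :=
              Set.ncard_le_ncard hsub (Set.toFinite _)
          _ = Nat.card {z : K | ι z = ι a} := (Nat.card_coe_set_eq _).symm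
      · obtain ⟨z0, hz0⟩ : ∃ z : K, ι z ≠ ι a := by
          by_cases h : ι x0 = ι a
          · exact ⟨y0, fun hy => hxy0 (h.trans hy.symm)⟩
          · exact ⟨x0, h⟩
        have hss : {z : K | ι z = ι a} ⊂ Set.univ := by
          refine ⟨Set.subset_univ _, fun hsup => hz0 (hsup (Set.mem_univ z0))⟩
        calc Nat.card {z : K | ι z = ι a} = ({z : K | ι z = ι a}).ncard :=
              Nat.card_coe_set_eq _
          _ < (Set.univ : Set K).ncard := Set.ncard_lt_ncard hss (Set.toFinite _)
          _ = Nat.card K := Set.ncard_univ _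
      · intro z hz
        have hz' : ι z ≠ ι a := hz
        by_cases hA : (cayleyGraph G Λ).Adj (ι z) (ι a)
        · left
          intro y hy
          have hy' : ι y = ι a := hy
          have hne2 : ι z ≠ ι y := by rw [hy']; exact hz'
          exact θ.map_adj_iff.mp ((hadj z y hne2).mpr (by rw [hy']; exact hA))
        · right
          intro y hy hAdj
          have hy' : ι y = ι a := hy
          have hne2 : ι z ≠ ι y := by rw [hy']; exact hz'
          exact hA (by rw [← hy']; exact (hadj z y hne2).mp (θ.map_adj_iff.mpr hAdj))
    obtain ⟨φ, hφ, heq⟩ := hrigid K (fun g => if h : g ∈ K then ι ⟨g, h⟩ else g)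
      (by nlinarith [Nat.cast_nonneg (α := ℝ) (Nat.card K)])
      (by
        intro a ha b hb h
        simp only [dif_pos ha, dif_pos hb] at h
        exact congrArg Subtype.val (hinj h))
      (by
        intro v hv w hw hvw
        simp only [dif_pos hv, dif_pos hw]
        have hne2 : ι ⟨v, hv⟩ ≠ ι ⟨w, hw⟩ := by
          intro h
          exact hvw (congrArg Subtype.val (hinj h))
        exact (hadj _ _ hne2).symm.trans (hθadj ⟨v, hv⟩ ⟨w, hw⟩))
    right
    refine ⟨φ, hφ, fun x => ?_⟩
    have hx : ι x = φ ↑x := by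
      have := heq x.2
      simpa [dif_pos x.2] using this
    exact hx ▸ hιmem x
end

section
/- Let H̃ be a Cayley graph of an abelian group of size k̃ and let H be a (q,δ)-reasonable induced subgraph of H̃ on k ≥ k̃ − (1/4)·log k̃ vertices (for some 0<q<1/2, 0<δ<1). Then every subset S ⊆ V(H) of size |S| ≥ (1−q)·k is a signature of H. -/
universe u v

open Filter

/-- If `H` is a `(q, δ)`-reasonable induced subgraph of a Cayley graph
`H̃` on `k ≥ k̃ - (1/4) log k̃` vertices, then every `S ⊆ V(H)` with `|S| ≥ (1-q)k`
is a signature of `H`. -/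
theorem statement9 {G : Type} [AddCommGroup G] [Fintype G] (Λ : Set G)
    (K : Set G) (q δ : ℝ) (hq0 : 0 < q) (hq1 : q < 1 / 2) (hδ0 : 0 < δ) (hδ1 : δ < 1)
    (hK : (Fintype.card G : ℝ) - Real.log (Fintype.card G) / 4 ≤ (Nat.card K : ℝ))
    (hreas : IsReasonable Λ K q δ)
    (S : Set K) (hS : (1 - q) * (Nat.card K : ℝ) ≤ (Nat.card S : ℝ)) :
    IsSignature ((cayleyGraph G Λ).induce K) S := by
  classical
  intro v hv w hw hvw heq
  have hvw' : (v : G) ≠ (w : G) := fun h => hvw (Subtype.ext h)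
  obtain ⟨-, hdist, -⟩ := hreas
  have hD := hdist (v : G) (w : G) hvw'
  set D : Set G := {u : G | u ∈ K ∧ u ≠ ↑v ∧ u ≠ ↑w ∧
      Xor' ((cayleyGraph G Λ).Adj u ↑v) ((cayleyGraph G Λ).Adj u ↑w)} with hDdef
  set S' : Set G := Subtype.val '' S with hS'def
  -- D is disjoint from S'
  have hDS : Disjoint D S' := by
    rw [Set.disjoint_left]
    rintro u ⟨huK, huv, huw, hxor⟩ ⟨s, hs, rfl⟩
    have h1 : ((cayleyGraph G Λ).induce K).Adj v s ↔ ((cayleyGraph G Λ).induce K).Adj w s := by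
      constructor
      · intro h
        have hmem : s ∈ (((cayleyGraph G Λ).induce K).neighborSet v ∩ S) := ⟨h, hs⟩
        rw [heq] at hmem; exact hmem.1
      · intro h
        have hmem : s ∈ (((cayleyGraph G Λ).induce K).neighborSet w ∩ S) := ⟨h, hs⟩
        rw [← heq] at hmem; exact hmem.1
    have h2 : (cayleyGraph G Λ).Adj ↑s ↑v ↔ (cayleyGraph G Λ).Adj ↑s ↑w := by
      simpa [SimpleGraph.induce, SimpleGraph.comap_adj, SimpleGraph.adj_comm] using h1
    rcases hxor with ⟨ha, hb⟩ | ⟨ha, hb⟩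
    · exact hb (h2.mp ha)
    · exact hb (h2.mpr ha)
  have hvS' : (v : G) ∉ S' := by
    rintro ⟨s, hs, hval⟩
    exact hv (by rwa [Subtype.val_injective hval] at hs)
  have hwS' : (w : G) ∉ S' := by
    rintro ⟨s, hs, hval⟩
    exact hw (by rwa [Subtype.val_injective hval] at hs)
  have hPS : Disjoint ({(v : G), (w : G)} : Set G) S' := by
    rw [Set.disjoint_left]
    rintro u (rfl | rfl) <;> assumption
  have hDP : Disjoint D ({(v : G), (w : G)} : Set G) := by
    rw [Set.disjoint_right]
    rintro u (rfl | rfl) ⟨_, h1, h2, _⟩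
    · exact h1 rfl
    · exact h2 rfl
  -- all three sets are inside K
  have hsubK : (S' ∪ {(v : G), (w : G)} ∪ D) ⊆ K := by
    rintro u ((⟨s, _, rfl⟩ | (rfl | rfl)) | ⟨huK, _⟩)
    · exact s.2
    · exact v.2
    · exact w.2
    · exact huK
  have hcard : S'.ncard + 2 + D.ncard ≤ K.ncard := by
    have h1 : (S' ∪ {(v : G), (w : G)} ∪ D).ncard ≤ K.ncard :=
      Set.ncard_le_ncard hsubK (Set.toFinite K)
    have h2 : (S' ∪ {(v : G), (w : G)} ∪ D).ncard
        = S'.ncard + 2 + D.ncard := by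
      rw [Set.ncard_union_eq (by
            rw [Set.disjoint_union_left]
            exact ⟨hDS.symm, hDP.symm⟩) (Set.toFinite _) (Set.toFinite _),
          Set.ncard_union_eq hPS.symm (Set.toFinite _) (Set.toFinite _),
          Set.ncard_pair hvw']
    omega
  have hS'card : S'.ncard = Nat.card S := by
    rw [hS'def, Set.ncard_image_of_injective _ Subtype.val_injective,
      Nat.card_coe_set_eq]
  have hDcard : (Nat.card D : ℝ) = (D.ncard : ℝ) := by
    rw [Nat.card_coe_set_eq]
  have hKcard : (Nat.card K : ℝ) = (K.ncard : ℝ) := by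
    rw [Nat.card_coe_set_eq]
  have hcardR : (Nat.card S : ℝ) + 2 + (Nat.card D : ℝ) ≤ (Nat.card K : ℝ) := by
    rw [hDcard, hKcard, ← hS'card]
    exact_mod_cast hcard
  linarith
end

section
/- Let k̃ ≥ 10^{200}, let H̃ be a Cayley graph of an abelian group of size k̃, and let H be a (q,δ)-reasonable induced subgraph of H̃ on k ≥ k̃ − (1/4)·log k̃ vertices, where 10^4·(log k)^{6/5}·k^{−1/5} ≤ q ≤ 10^{−20} and 0<δ<1. Then for every subset X ⊆ V(H) of size |X| ≥ (1−q/2)·k, there is a signature S of H with S ⊆ X and |S| ≤ (5/q)·log k. -/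
universe u v

open Filter

open Classical in
/-- Auxiliary: the set of ordered pairs of distinct vertices of the induced subgraph on `K`
not in `S` that are not distinguished by any vertex of `S`. -/
noncomputable def badPairs {G : Type} [AddCommGroup G] [Fintype G] (Λ : Set G) (K : Set G)
    (S : Finset ↥K) : Finset (↥K × ↥K) :=
  Finset.univ.filter fun p => p.1 ≠ p.2 ∧ p.1 ∉ S ∧ p.2 ∉ S ∧
    ∀ u ∈ S, ¬(u ≠ p.1 ∧ u ≠ p.2 ∧
      Xor' ((cayleyGraph G Λ).Adj ↑u ↑p.1) ((cayleyGraph G Λ).Adj ↑u ↑p.2))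

set_option maxRecDepth 8000
set_option maxHeartbeats 1000000
/-- Let `k̃ ≥ 10^200` and let `H` be a `(q, δ)`-reasonable induced
subgraph of a Cayley graph of size `k̃`, on `k ≥ k̃ - (1/4) log k̃` vertices, with
`10⁴ (log k)^{6/5} k^{-1/5} ≤ q ≤ 10^{-20}`. Then every `X ⊆ V(H)` with
`|X| ≥ (1 - q/2)k` contains a signature `S` of `H` with `|S| ≤ (5/q) log k`. -/
theorem statement10 {G : Type} [AddCommGroup G] [Fintype G] (Λ : Set G)
    (hcard : 10 ^ 200 ≤ Fintype.card G)
    (K : Set G) (q δ : ℝ) (hq0 : 0 < q) (hq1 : q < 1 / 2) (hδ0 : 0 < δ) (hδ1 : δ < 1)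
    (hK : (Fintype.card G : ℝ) - Real.log (Fintype.card G) / 4 ≤ (Nat.card K : ℝ))
    (hreas : IsReasonable Λ K q δ)
    (hqlow : 10 ^ 4 * Real.log (Nat.card K) ^ ((6 : ℝ) / 5) *
        (Nat.card K : ℝ) ^ (-(1 : ℝ) / 5) ≤ q)
    (hqhigh : q ≤ 1 / 10 ^ 20)
    (X : Set K) (hX : (1 - q / 2) * (Nat.card K : ℝ) ≤ (Nat.card X : ℝ)) :
    ∃ S : Set K, S ⊆ X ∧ IsSignature ((cayleyGraph G Λ).induce K) S ∧
      (Nat.card S : ℝ) ≤ 5 / q * Real.log (Nat.card K) := by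
  classical
  obtain ⟨hprime, hdist, hrec⟩ := hreas
  set k : ℕ := Nat.card ↥K with hkdef
  have hkG : (k : ℕ) = Fintype.card ↥K := Nat.card_eq_fintype_card
  -- `k` is large
  have hGpos : (0 : ℝ) < (Fintype.card G : ℝ) := by
    have : (10:ℝ) ^ 200 ≤ (Fintype.card G : ℝ) := by exact_mod_cast hcard
    positivity
  have hG200 : (10:ℝ) ^ 200 ≤ (Fintype.card G : ℝ) := by exact_mod_cast hcard
  have hk16 : (16 : ℝ) ≤ (k : ℝ) := by
    have h3 := Real.log_le_sub_one_of_pos hGpos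
    have h10 : (16:ℝ) ≤ (3/4) * 10 ^ 200 := by norm_num
    nlinarith [hK]
  have hkpos : (0 : ℝ) < (k : ℝ) := by linarith
  have hq2 : (0 : ℝ) ≤ 1 - q / 2 := by linarith
  have hL1 : (1 : ℝ) ≤ Real.log (k : ℝ) := by
    rw [Real.le_log_iff_exp_le hkpos]
    have := Real.exp_one_lt_d9
    linarith
  set L : ℝ := Real.log (k : ℝ) with hLdef
  -- the finset version of X
  set Xf : Finset ↥K := X.toFinset with hXfdef
  have hXcard : (Nat.card ↥X : ℕ) = Xf.card := by
    rw [Nat.card_eq_fintype_card, hXfdef, Set.toFinset_card]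
  have hXf : (1 - q / 2) * (k : ℝ) ≤ (Xf.card : ℝ) := by
    rw [← hXcard]; exact hX
  have hXfk : (Xf.card : ℕ) ≤ k := by
    rw [hkG]; exact Finset.card_le_univ _
  have hXfne : Xf.Nonempty := by
    rw [← Finset.card_pos]
    have : (0:ℝ) < (Xf.card : ℝ) := lt_of_lt_of_le (by nlinarith) hXf
    exact_mod_cast this
  -- key counting fact: every pair of distinct vertices is distinguished by many vertices of X
  have key : ∀ v w : ↥K, v ≠ w →
      q / 2 * (k : ℝ) ≤ ((Xf.filter fun u => u ≠ v ∧ u ≠ w ∧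
        Xor' ((cayleyGraph G Λ).Adj ↑u ↑v) ((cayleyGraph G Λ).Adj ↑u ↑w)).card : ℝ) := by
    intro v w hvw
    have hvwG : (v : G) ≠ (w : G) := fun h => hvw (Subtype.ext h)
    have h1 := hdist (v : G) (w : G) hvwG
    set A : Finset ↥K := Finset.univ.filter (fun u => u ≠ v ∧ u ≠ w ∧
        Xor' ((cayleyGraph G Λ).Adj ↑u ↑v) ((cayleyGraph G Λ).Adj ↑u ↑w)) with hA
    have h2 : Nat.card {u : G | u ∈ K ∧ u ≠ ↑v ∧ u ≠ ↑w ∧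
        Xor' ((cayleyGraph G Λ).Adj u ↑v) ((cayleyGraph G Λ).Adj u ↑w)} ≤ A.card := by
      rw [← Fintype.card_coe A, ← Nat.card_eq_fintype_card]
      have hinj : Function.Injective (fun x : {u : G | u ∈ K ∧ u ≠ ↑v ∧ u ≠ ↑w ∧
          Xor' ((cayleyGraph G Λ).Adj u ↑v) ((cayleyGraph G Λ).Adj u ↑w)} =>
          (⟨⟨x.1, x.2.1⟩, by
            rw [hA, Finset.mem_filter]
            refine ⟨Finset.mem_univ _, ?_, ?_, x.2.2.2.2⟩
            · intro h; exact x.2.2.1 (congrArg Subtype.val h)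
            · intro h; exact x.2.2.2.1 (congrArg Subtype.val h)⟩ : {y // y ∈ A})) := by
        intro a b hab
        exact Subtype.ext (congrArg (fun z : {y // y ∈ A} => ((z.1 : ↥K) : G)) hab)
      exact Nat.card_le_card_of_injective _ hinj
    have h3 : A ⊆ (Xf.filter fun u => u ≠ v ∧ u ≠ w ∧
        Xor' ((cayleyGraph G Λ).Adj ↑u ↑v) ((cayleyGraph G Λ).Adj ↑u ↑w)) ∪
        (Finset.univ \ Xf) := by
      intro u hu
      by_cases hux : u ∈ Xf
      · exact Finset.mem_union_left _
          (Finset.mem_filter.mpr ⟨hux, (Finset.mem_filter.mp hu).2⟩)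
      · exact Finset.mem_union_right _ (Finset.mem_sdiff.mpr ⟨Finset.mem_univ _, hux⟩)
    have h4 : (A.card : ℝ) ≤ ((Xf.filter fun u => u ≠ v ∧ u ≠ w ∧
        Xor' ((cayleyGraph G Λ).Adj ↑u ↑v) ((cayleyGraph G Λ).Adj ↑u ↑w)).card : ℝ)
        + ((k : ℝ) - (Xf.card : ℝ)) := by
      have := Finset.card_le_card h3
      have h5 := Finset.card_union_le
        (Xf.filter fun u => u ≠ v ∧ u ≠ w ∧
          Xor' ((cayleyGraph G Λ).Adj ↑u ↑v) ((cayleyGraph G Λ).Adj ↑u ↑w))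
        (Finset.univ \ Xf)
      have h6 : (Finset.univ \ Xf).card = Fintype.card ↥K - Xf.card :=
        by rw [Finset.card_sdiff_of_subset (Finset.subset_univ _), Finset.card_univ]
      have h7 : ((Fintype.card ↥K - Xf.card : ℕ) : ℝ) = (k : ℝ) - (Xf.card : ℝ) := by
        rw [Nat.cast_sub (hkG ▸ hXfk), hkG]
      have h8 := le_trans this h5
      rw [h6] at h8
      calc (A.card : ℝ) ≤ (((Xf.filter fun u => u ≠ v ∧ u ≠ w ∧
            Xor' ((cayleyGraph G Λ).Adj ↑u ↑v) ((cayleyGraph G Λ).Adj ↑u ↑w)).card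
            + (Fintype.card ↥K - Xf.card) : ℕ) : ℝ) := by exact_mod_cast h8
        _ = _ := by rw [Nat.cast_add, h7]
    have h9 : (k : ℝ) - (Xf.card : ℝ) ≤ q / 2 * (k : ℝ) := by nlinarith
    have h10 : q * (k : ℝ) ≤ (A.card : ℝ) := le_trans h1 (by exact_mod_cast h2)
    nlinarith
  -- main induction
  have main : ∀ n : ℕ, ∃ S : Finset ↥K, ↑S ⊆ X ∧ S.card ≤ n ∧
      ((badPairs Λ K S).card : ℝ) ≤ (k : ℝ) ^ 2 * (1 - q / 2) ^ n := by
    intro n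
    induction n with
    | zero =>
      refine ⟨∅, by simp, le_refl _, ?_⟩
      have h1 : (badPairs Λ K ∅).card ≤ Fintype.card (↥K × ↥K) := by
        rw [← Finset.card_univ]
        exact Finset.card_le_card (Finset.filter_subset _ _)
      have h2 : (Fintype.card (↥K × ↥K) : ℝ) = (k : ℝ) ^ 2 := by
        rw [Fintype.card_prod, ← hkG]; push_cast; ring
      calc ((badPairs Λ K ∅).card : ℝ) ≤ (Fintype.card (↥K × ↥K) : ℝ) := by exact_mod_cast h1
        _ = (k : ℝ) ^ 2 * (1 - q / 2) ^ 0 := by rw [h2]; ring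
    | succ n ih =>
      obtain ⟨S, hSX, hScard, hSbad⟩ := ih
      by_cases hzero : (badPairs Λ K S).card = 0
      · refine ⟨S, hSX, le_trans hScard (Nat.le_succ _), ?_⟩
        simp only [hzero, Nat.cast_zero]
        positivity
      -- double counting
      have hsum : ∑ pr ∈ badPairs Λ K S, ((Xf.filter fun u => u ≠ pr.1 ∧ u ≠ pr.2 ∧
          Xor' ((cayleyGraph G Λ).Adj ↑u ↑pr.1) ((cayleyGraph G Λ).Adj ↑u ↑pr.2)).card : ℝ)
          = ∑ u ∈ Xf, (((badPairs Λ K S).filter fun pr => u ≠ pr.1 ∧ u ≠ pr.2 ∧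
          Xor' ((cayleyGraph G Λ).Adj ↑u ↑pr.1) ((cayleyGraph G Λ).Adj ↑u ↑pr.2)).card : ℝ) := by
        have hsumN : ∑ pr ∈ badPairs Λ K S, (Xf.filter fun u => u ≠ pr.1 ∧ u ≠ pr.2 ∧
            Xor' ((cayleyGraph G Λ).Adj ↑u ↑pr.1) ((cayleyGraph G Λ).Adj ↑u ↑pr.2)).card
            = ∑ u ∈ Xf, ((badPairs Λ K S).filter fun pr => u ≠ pr.1 ∧ u ≠ pr.2 ∧
            Xor' ((cayleyGraph G Λ).Adj ↑u ↑pr.1) ((cayleyGraph G Λ).Adj ↑u ↑pr.2)).card := by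
          simp only [Finset.card_filter]
          exact Finset.sum_comm
        exact_mod_cast congrArg (fun m : ℕ => (m : ℝ)) hsumN
      have hlow : ∑ u ∈ Xf, (q / 2 * ((badPairs Λ K S).card : ℝ)) ≤
          ∑ u ∈ Xf, (((badPairs Λ K S).filter fun pr => u ≠ pr.1 ∧ u ≠ pr.2 ∧
          Xor' ((cayleyGraph G Λ).Adj ↑u ↑pr.1) ((cayleyGraph G Λ).Adj ↑u ↑pr.2)).card : ℝ) := by
        rw [← hsum]
        have hstep : ∀ pr ∈ badPairs Λ K S, q / 2 * (k:ℝ) ≤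
            ((Xf.filter fun u => u ≠ pr.1 ∧ u ≠ pr.2 ∧
            Xor' ((cayleyGraph G Λ).Adj ↑u ↑pr.1) ((cayleyGraph G Λ).Adj ↑u ↑pr.2)).card : ℝ) := by
          intro pr hpr
          have hne : pr.1 ≠ pr.2 := ((Finset.mem_filter.mp hpr).2).1
          exact key pr.1 pr.2 hne
        have h1 : ((badPairs Λ K S).card : ℝ) * (q / 2 * (k:ℝ)) ≤
            ∑ pr ∈ badPairs Λ K S, ((Xf.filter fun u => u ≠ pr.1 ∧ u ≠ pr.2 ∧
            Xor' ((cayleyGraph G Λ).Adj ↑u ↑pr.1) ((cayleyGraph G Λ).Adj ↑u ↑pr.2)).card : ℝ) := by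
          calc ((badPairs Λ K S).card : ℝ) * (q / 2 * (k:ℝ))
              = ∑ _pr ∈ badPairs Λ K S, q / 2 * (k:ℝ) := by
                rw [Finset.sum_const, nsmul_eq_mul]
            _ ≤ _ := Finset.sum_le_sum hstep
        have h2 : (Xf.card : ℝ) * (q / 2 * ((badPairs Λ K S).card : ℝ)) ≤
            ((badPairs Λ K S).card : ℝ) * (q / 2 * (k:ℝ)) := by
          have hXk : (Xf.card : ℝ) ≤ (k : ℝ) := by exact_mod_cast hXfk
          calc (Xf.card : ℝ) * (q / 2 * ((badPairs Λ K S).card : ℝ))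
              ≤ (k:ℝ) * (q / 2 * ((badPairs Λ K S).card : ℝ)) :=
                mul_le_mul_of_nonneg_right hXk (by positivity)
            _ = ((badPairs Λ K S).card : ℝ) * (q / 2 * (k:ℝ)) := by ring
        rw [Finset.sum_const, nsmul_eq_mul]
        linarith
      obtain ⟨u, huX, hu⟩ := Finset.exists_le_of_sum_le hXfne hlow
      -- insert u into S
      refine ⟨insert u S, ?_, ?_, ?_⟩
      · intro x hx
        rcases Finset.mem_insert.mp hx with h | h
        · subst h; exact (Set.mem_toFinset.mp huX)
        · exact hSX h
      · exact le_trans (Finset.card_insert_le _ _) (Nat.succ_le_succ hScard)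
      · have hsub : badPairs Λ K (insert u S) ⊆ (badPairs Λ K S) \
            ((badPairs Λ K S).filter fun pr => u ≠ pr.1 ∧ u ≠ pr.2 ∧
            Xor' ((cayleyGraph G Λ).Adj ↑u ↑pr.1) ((cayleyGraph G Λ).Adj ↑u ↑pr.2)) := by
          intro pr hpr
          rw [badPairs, Finset.mem_filter] at hpr
          obtain ⟨-, hne, h1, h2, h3⟩ := hpr
          have hmem : pr ∈ badPairs Λ K S := by
            rw [badPairs, Finset.mem_filter]
            exact ⟨Finset.mem_univ _, hne, fun h => h1 (Finset.mem_insert_of_mem h),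
              fun h => h2 (Finset.mem_insert_of_mem h),
              fun x hx => h3 x (Finset.mem_insert_of_mem hx)⟩
          rw [Finset.mem_sdiff]
          exact ⟨hmem, fun hcon => (h3 u (Finset.mem_insert_self _ _))
            (Finset.mem_filter.mp hcon).2⟩
        have hcard2 : ((badPairs Λ K (insert u S)).card : ℝ) ≤
            ((badPairs Λ K S).card : ℝ) - (((badPairs Λ K S).filter fun pr =>
            u ≠ pr.1 ∧ u ≠ pr.2 ∧ Xor' ((cayleyGraph G Λ).Adj ↑u ↑pr.1)
            ((cayleyGraph G Λ).Adj ↑u ↑pr.2)).card : ℝ) := by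
          have h1 := Finset.card_le_card hsub
          rw [Finset.card_sdiff_of_subset (Finset.filter_subset _ _)] at h1
          have h2 : ((badPairs Λ K S).filter fun pr => u ≠ pr.1 ∧ u ≠ pr.2 ∧
              Xor' ((cayleyGraph G Λ).Adj ↑u ↑pr.1) ((cayleyGraph G Λ).Adj ↑u ↑pr.2)).card ≤
              (badPairs Λ K S).card := Finset.card_le_card (Finset.filter_subset _ _)
          calc ((badPairs Λ K (insert u S)).card : ℝ) ≤
              (((badPairs Λ K S).card - ((badPairs Λ K S).filter fun pr =>
              u ≠ pr.1 ∧ u ≠ pr.2 ∧ Xor' ((cayleyGraph G Λ).Adj ↑u ↑pr.1)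
              ((cayleyGraph G Λ).Adj ↑u ↑pr.2)).card : ℕ) : ℝ) := by exact_mod_cast h1
            _ = _ := by rw [Nat.cast_sub h2]
        have hbpos : (0:ℝ) ≤ ((badPairs Λ K S).card : ℝ) := Nat.cast_nonneg _
        calc ((badPairs Λ K (insert u S)).card : ℝ)
            ≤ ((badPairs Λ K S).card : ℝ) - q / 2 * ((badPairs Λ K S).card : ℝ) := by
              linarith
          _ = (1 - q / 2) * ((badPairs Λ K S).card : ℝ) := by ring
          _ ≤ (1 - q / 2) * ((k : ℝ) ^ 2 * (1 - q / 2) ^ n) :=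
              mul_le_mul_of_nonneg_left hSbad hq2
          _ = (k : ℝ) ^ 2 * (1 - q / 2) ^ (n + 1) := by ring
  -- choose n
  set n : ℕ := ⌊5 / q * L⌋₊ with hndef
  obtain ⟨S, hSX, hScard, hSbad⟩ := main n
  have hbad0 : (badPairs Λ K S) = ∅ := by
    have hup : ((badPairs Λ K S).card : ℝ) < 1 := by
      have e1 : ((1:ℝ) - q/2) ^ n ≤ Real.exp (-(q/2)) ^ n := by
        apply pow_le_pow_left₀ hq2
        linarith [Real.add_one_le_exp (-(q/2))]
      have e2 : Real.exp (-(q/2)) ^ n = Real.exp ((n:ℝ) * -(q/2)) := by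
        rw [Real.exp_nat_mul]
      have e3 : (k:ℝ)^2 = Real.exp (2 * L) := by
        rw [hLdef, ← Real.exp_log hkpos]
        rw [← Real.exp_nat_mul]
        norm_num
      have hfl : 5 / q * L < (n:ℝ) + 1 := Nat.lt_floor_add_one _
      have h5 : 5 * L < q * ((n:ℝ) + 1) := by
        have := mul_lt_mul_of_pos_left hfl hq0
        calc 5 * L = q * (5 / q * L) := by field_simp
          _ < q * ((n:ℝ) + 1) := this
      have harg : 2 * L + (n:ℝ) * -(q/2) < 0 := by nlinarith
      calc ((badPairs Λ K S).card : ℝ) ≤ (k:ℝ)^2 * ((1:ℝ) - q/2) ^ n := hSbad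
        _ ≤ (k:ℝ)^2 * Real.exp (-(q/2)) ^ n := by
            apply mul_le_mul_of_nonneg_left e1; positivity
        _ = Real.exp (2 * L + (n:ℝ) * -(q/2)) := by
            rw [e2, e3, ← Real.exp_add]
        _ < 1 := by rw [← Real.exp_zero]; exact Real.exp_lt_exp.mpr harg
    have : (badPairs Λ K S).card = 0 := by exact_mod_cast Nat.lt_one_iff.mp (by exact_mod_cast hup)
    exact Finset.card_eq_zero.mp this
  refine ⟨(↑S : Set ↥K), hSX, ?_, ?_⟩
  · -- signature
    intro v hv w hw hvw heq
    have hvS : v ∉ S := fun h => hv (Finset.mem_coe.mpr h)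
    have hwS : w ∉ S := fun h => hw (Finset.mem_coe.mpr h)
    have hpair : (v, w) ∉ badPairs Λ K S := by rw [hbad0]; exact Finset.notMem_empty _
    have hex : ∃ u ∈ S, u ≠ v ∧ u ≠ w ∧
        Xor' ((cayleyGraph G Λ).Adj ↑u ↑v) ((cayleyGraph G Λ).Adj ↑u ↑w) := by
      by_contra hcon
      push_neg at hcon
      apply hpair
      rw [badPairs, Finset.mem_filter]
      exact ⟨Finset.mem_univ _, hvw, hvS, hwS, fun x hx h => hcon x hx h.1 h.2.1 h.2.2⟩
    obtain ⟨u, huS, hne1, hne2, hxor⟩ := hex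
    have huC : u ∈ (↑S : Set ↥K) := Finset.mem_coe.mpr huS
    rcases hxor with ⟨hav, hnw⟩ | ⟨haw, hnv⟩
    · have hmem : u ∈ ((cayleyGraph G Λ).induce K).neighborSet v ∩ ↑S :=
        ⟨hav.symm, huC⟩
      rw [heq] at hmem
      exact hnw hmem.1.symm
    · have hmem : u ∈ ((cayleyGraph G Λ).induce K).neighborSet w ∩ ↑S :=
        ⟨haw.symm, huC⟩
      rw [← heq] at hmem
      exact hnv hmem.1.symm
  · -- size bound
    have hcardS : (Nat.card ↥(↑S : Set ↥K) : ℝ) = (S.card : ℝ) := by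
      rw [Nat.card_coe_set_eq, Set.ncard_coe_finset]
    rw [hcardS]
    calc (S.card : ℝ) ≤ (n : ℝ) := by exact_mod_cast hScard
      _ ≤ 5 / q * L := Nat.floor_le (by positivity)
end

section
/- Let ℓ, ℓ' ≥ 1 and m, m' ≥ 0 be integers. Then: (i) for any non-negative integers m̃₁,…,m̃_ℓ with m̃₁+…+m̃_ℓ ≤ m, one has m̃₁⋯m̃_ℓ ≤ E_ℓ(m); (ii) E_ℓ(m)·E_{ℓ'}(m') ≤ E_{ℓ+ℓ'}(m+m'); (iii) if m ≥ ℓ, ℓ' ≤ ℓ, and m' ≤ (1−μ)·m for some real μ ≥ 0, then E_{ℓ'}(m') ≤ e^{3(ℓ−ℓ') − μℓ/2}·(ℓ/m)^{ℓ−ℓ'}·E_ℓ(m). -/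
universe u v

open Filter

open Finset


lemma epart_zero (m : ℕ) : Epart 0 m = 1 := by
  simp [Epart]

lemma epart_one (m : ℕ) : Epart 1 m = m := by
  simp [Epart, Nat.mod_one]

lemma epart_pos {l x : ℕ} (hl : 1 ≤ l) (h : l ≤ x) : 1 ≤ Epart l x := by
  have hq : 1 ≤ x / l := (Nat.one_le_div_iff (by omega)).2 h
  have h1 : 0 < (x / l + 1) ^ (x % l) * (x / l) ^ (l - x % l) :=
    Nat.mul_pos (Nat.pow_pos (by omega)) (Nat.pow_pos (by omega))
  exact h1

lemma epart_eq_zero {l x : ℕ} (hl : 1 ≤ l) (h : x < l) : Epart l x = 0 := by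
  have h1 : x / l = 0 := Nat.div_eq_of_lt h
  have h2 : x % l = x := Nat.mod_eq_of_lt h
  rw [Epart, h1, h2]
  rw [Nat.zero_pow (by omega : 0 < l - x)]
  simp

lemma epart_id {l : ℕ} (hl : 1 ≤ l) (t : ℕ) :
    Epart l (t + 1) * (t / l) = Epart l t * (t / l + 1) := by
  set q := t / l with hq
  set r := t % l with hr
  have hrl : r < l := Nat.mod_lt _ (by omega)
  have ht : l * q + r = t := Nat.div_add_mod t l
  rcases eq_or_lt_of_le (Nat.succ_le_of_lt hrl) with hcase | hcase
  · -- r + 1 = l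
    have hmul : l * (q + 1) = l * q + l := by ring
    have h1 : t + 1 = l * (q + 1) := by omega
    have hd : (t + 1) / l = q + 1 := by rw [h1]; exact Nat.mul_div_cancel_left _ (by omega)
    have hm : (t + 1) % l = 0 := by rw [h1]; exact Nat.mul_mod_right _ _
    rw [Epart, Epart, hd, hm, ← hq, ← hr]
    have hlr : l - r = 1 := by omega
    have hr1 : r = l - 1 := by omega
    rw [hlr, pow_zero, one_mul, Nat.sub_zero, pow_one]
    have : (q + 1) ^ l = (q + 1) ^ r * (q + 1) := by
      rw [← pow_succ]; congr 1; omega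
    rw [this]; ring
  · -- r + 1 < l
    have h1 : t + 1 = l * q + (r + 1) := by omega
    have hd : (t + 1) / l = q := by
      rw [h1, Nat.mul_add_div (by omega), Nat.div_eq_of_lt hcase, Nat.add_zero]
    have hm : (t + 1) % l = r + 1 := by
      rw [h1, Nat.mul_add_mod, Nat.mod_eq_of_lt hcase]
    rw [Epart, Epart, hd, hm, ← hq, ← hr]
    have h2 : l - r = (l - (r + 1)) + 1 := by omega
    rw [h2, pow_succ, pow_succ]
    ring




lemma epart_base (hl : 1 ≤ l) (m : ℕ) :
    ((m + l) / (l + 1)) * Epart l (m - (m + l) / (l + 1)) = Epart (l + 1) m := by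
  set q := m / (l + 1) with hq
  set r := m % (l + 1) with hr
  have hrl : r < l + 1 := Nat.mod_lt _ (by omega)
  have ht : (l + 1) * q + r = m := Nat.div_add_mod m (l + 1)
  rcases Nat.eq_zero_or_pos r with h0 | h0
  · -- r = 0
    have hc : (m + l) / (l + 1) = q := by
      have : m + l = (l + 1) * q + l := by omega
      rw [this, Nat.mul_add_div (by omega), Nat.div_eq_of_lt (by omega), Nat.add_zero]
    have hmc : m - q = l * q := by
      have : (l + 1) * q = l * q + q := by ring
      omega
    rw [hc, hmc]
    have hd : l * q / l = q := Nat.mul_div_cancel_left _ (by omega)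
    have hm2 : l * q % l = 0 := Nat.mul_mod_right _ _
    rw [Epart, Epart, hd, hm2, ← hq, ← hr, h0]
    simp only [pow_zero, one_mul, Nat.sub_zero, pow_succ]
    ring
  · -- r ≥ 1
    have hc : (m + l) / (l + 1) = q + 1 := by
      have h1 : m + l = (l + 1) * (q + 1) + (r - 1) := by
        have : (l + 1) * (q + 1) = (l + 1) * q + l + 1 := by ring
        omega
      rw [h1, Nat.mul_add_div (by omega), Nat.div_eq_of_lt (by omega), Nat.add_zero]
    have hmc : m - (q + 1) = l * q + (r - 1) := by
      have : (l + 1) * q = l * q + q := by ring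
      omega
    rw [hc, hmc]
    have hd : (l * q + (r - 1)) / l = q := by
      rw [Nat.mul_add_div (by omega), Nat.div_eq_of_lt (by omega), Nat.add_zero]
    have hm2 : (l * q + (r - 1)) % l = r - 1 := by
      rw [Nat.mul_add_mod, Nat.mod_eq_of_lt (by omega)]
    rw [Epart, Epart, hd, hm2, ← hq, ← hr]
    have h2 : (q + 1) ^ r = (q + 1) ^ (r - 1) * (q + 1) := by
      rw [← pow_succ]; congr 1; omega
    have h3 : l - (r - 1) = (l + 1 - r) + 0 := by omega
    rw [h2, h3]
    ring


lemma epart_D (l : ℕ) (m a : ℕ) (hma : m ≤ a * (l + 1)) (ham : a ≤ m) :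
    a * Epart l (m - a) ≤ Epart (l + 1) m := by
  rcases Nat.eq_zero_or_pos l with rfl | hl
  · have : a = m := by omega
    subst this
    simp [epart_zero, epart_one]
  · set c := (m + l) / (l + 1) with hc
    have hca : c ≤ a := by
      rw [hc, Nat.div_le_iff_le_mul_add_pred (by omega : 0 < l + 1)]
      have : (l + 1) * a = a * (l + 1) := by ring
      omega
    clear hma
    induction a, hca using Nat.le_induction with
    | base =>
      exact le_of_eq (epart_base hl m)
    | succ a hca IH =>
      have hma : m ≤ a * (l + 1) := by
        have := (Nat.div_le_iff_le_mul_add_pred (by omega : 0 < l + 1)).1 hca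
        have h2 : (l + 1) * a = a * (l + 1) := by ring
        omega
      have ham' : a ≤ m := by omega
      set t := m - (a + 1) with htdef
      have ht1 : t + 1 = m - a := by omega
      set Q := t / l with hQ
      have hQl : Q * l ≤ t := by
        rw [hQ]; exact Nat.div_mul_le_self t l
      have hQa : Q ≤ a := by
        by_contra hcon
        push_neg at hcon
        have h2 : (a + 1) * l ≤ Q * l := Nat.mul_le_mul_right _ hcon
        have h3 : a * (l + 1) = a * l + a := by ring
        have h4 : (a + 1) * l = a * l + l := by ring
        omega
      have hid := epart_id hl t
      rw [ht1] at hid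
      have h5 : (a + 1) * Epart l t * (Q + 1) ≤ a * Epart l (m - a) * (Q + 1) := by
        calc (a + 1) * Epart l t * (Q + 1) = (a + 1) * (Epart l t * (Q + 1)) := by ring
        _ = (a + 1) * (Epart l (m - a) * Q) := by rw [hid]
        _ = ((a + 1) * Q) * Epart l (m - a) := by ring
        _ ≤ (a * (Q + 1)) * Epart l (m - a) := by
            apply Nat.mul_le_mul_right
            nlinarith
        _ = a * Epart l (m - a) * (Q + 1) := by ring
      have h6 : (a + 1) * Epart l t ≤ a * Epart l (m - a) :=
        Nat.le_of_mul_le_mul_right h5 (Nat.succ_pos Q)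
      exact le_trans h6 (IH ham')

lemma prod_le_epart {ι : Type*} [DecidableEq ι] :
    ∀ (l : ℕ) (m : ℕ) (s : Finset ι) (f : ι → ℕ), s.card = l →
      (∑ i ∈ s, f i) ≤ m → (∏ i ∈ s, f i) ≤ Epart l m := by
  intro l
  induction l with
  | zero =>
    intro m s f hcard _
    rw [Finset.card_eq_zero] at hcard
    subst hcard
    simp [epart_zero]
  | succ l IH =>
    intro m s f hcard hsum
    have hne : s.Nonempty := Finset.card_pos.1 (by omega)
    obtain ⟨i₀, hi₀s, hi₀max⟩ := Finset.exists_max_image s f hne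
    set e := s.erase i₀ with he
    have hecard : e.card = l := by
      rw [he, Finset.card_erase_of_mem hi₀s, hcard]
      omega
    have hsplit : f i₀ + ∑ i ∈ e, f i = ∑ i ∈ s, f i := Finset.add_sum_erase s f hi₀s
    have hesum : ∑ i ∈ e, f i ≤ m := by omega
    set a := m - ∑ i ∈ e, f i with ha
    have hfa : f i₀ ≤ a := by omega
    have hame : ∑ i ∈ e, f i = m - a := by omega
    have hbound : ∑ i ∈ e, f i ≤ l * f i₀ := by
      calc ∑ i ∈ e, f i ≤ e.card • f i₀ :=
        Finset.sum_le_card_nsmul e f (f i₀) (fun x hx => hi₀max x (Finset.mem_of_mem_erase hx))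
      _ = l * f i₀ := by rw [hecard, smul_eq_mul]
    have hma : m ≤ a * (l + 1) := by
      have h1 : a * (l + 1) = a + l * a := by ring
      have h2 : l * f i₀ ≤ l * a := Nat.mul_le_mul_left _ hfa
      omega
    have hIH : ∏ i ∈ e, f i ≤ Epart l (m - a) := IH (m - a) e f hecard (by omega)
    calc ∏ i ∈ s, f i = f i₀ * ∏ i ∈ e, f i := (Finset.mul_prod_erase s f hi₀s).symm
    _ ≤ a * Epart l (m - a) := Nat.mul_le_mul hfa hIH
    _ ≤ Epart (l + 1) m := epart_D l m a hma (by omega)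

lemma aux_sum (q r s : ℕ) :
    ∑ i ∈ range (r + s), (q + if i < r then 1 else 0) = (r + s) * q + r := by
  have h1 : ∀ i ∈ range r, (q + if i < r then 1 else 0) = q + 1 := by
    intro i hi; rw [if_pos (Finset.mem_range.1 hi)]
  have h2 : ∀ i ∈ range s, (q + if r + i < r then 1 else 0) = q := by
    intro i _; rw [if_neg (by omega : ¬ r + i < r), Nat.add_zero]
  rw [Finset.sum_range_add, Finset.sum_congr rfl h1, Finset.sum_congr rfl h2,
    Finset.sum_const, Finset.sum_const, Finset.card_range, Finset.card_range,
    smul_eq_mul, smul_eq_mul]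
  ring

lemma aux_prod (q r s : ℕ) :
    ∏ i ∈ range (r + s), (q + if i < r then 1 else 0) = (q + 1) ^ r * q ^ s := by
  have h1 : ∀ i ∈ range r, (q + if i < r then 1 else 0) = q + 1 := by
    intro i hi; rw [if_pos (Finset.mem_range.1 hi)]
  have h2 : ∀ i ∈ range s, (q + if r + i < r then 1 else 0) = q := by
    intro i _; rw [if_neg (by omega : ¬ r + i < r), Nat.add_zero]
  rw [Finset.prod_range_add, Finset.prod_congr rfl h1, Finset.prod_congr rfl h2,
    Finset.prod_const, Finset.prod_const, Finset.card_range, Finset.card_range]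

lemma balf_sum {l : ℕ} (hl : 1 ≤ l) (m : ℕ) :
    ∑ i ∈ range l, (m / l + if i < m % l then 1 else 0) = m := by
  have hr : m % l < l := Nat.mod_lt _ (by omega)
  have h := aux_sum (m / l) (m % l) (l - m % l)
  rw [show m % l + (l - m % l) = l from by omega] at h
  rw [h]
  have hdm : l * (m / l) + m % l = m := Nat.div_add_mod m l
  nlinarith [hdm]

lemma balf_prod {l : ℕ} (hl : 1 ≤ l) (m : ℕ) :
    ∏ i ∈ range l, (m / l + if i < m % l then 1 else 0) = Epart l m := by
  have hr : m % l < l := Nat.mod_lt _ (by omega)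
  have h := aux_prod (m / l) (m % l) (l - m % l)
  rw [show m % l + (l - m % l) = l from by omega] at h
  rw [h, Epart]

lemma epart_mono {l : ℕ} (hl : 1 ≤ l) {m₁ m₂ : ℕ} (h : m₁ ≤ m₂) :
    Epart l m₁ ≤ Epart l m₂ := by
  have := prod_le_epart l m₂ (range l) (fun i => m₁ / l + if i < m₁ % l then 1 else 0)
    (Finset.card_range l) (by rw [balf_sum hl]; exact h)
  rwa [balf_prod hl] at this

lemma epart_mul_le {l' k q b : ℕ} (hl' : 1 ≤ l') :
    Epart l' b * q ^ k ≤ Epart (l' + k) (b + k * q) := by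
  set f : ℕ → ℕ := fun i => if i < l' then (b / l' + if i < b % l' then 1 else 0) else q with hf
  have h1 : ∀ i ∈ range l', f i = b / l' + if i < b % l' then 1 else 0 := by
    intro i hi; simp only [hf]; rw [if_pos (Finset.mem_range.1 hi)]
  have h2 : ∀ i ∈ range k, f (l' + i) = q := by
    intro i _; simp only [hf]; rw [if_neg (by omega : ¬ l' + i < l')]
  have e1 : ∑ i ∈ range l', f i = b := by
    rw [Finset.sum_congr rfl h1, balf_sum hl']
  have e2 : ∑ i ∈ range k, f (l' + i) = k * q := by
    rw [Finset.sum_congr rfl h2, Finset.sum_const, Finset.card_range, smul_eq_mul]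
  have p1 : ∏ i ∈ range l', f i = Epart l' b := by
    rw [Finset.prod_congr rfl h1, balf_prod hl']
  have p2 : ∏ i ∈ range k, f (l' + i) = q ^ k := by
    rw [Finset.prod_congr rfl h2, Finset.prod_const, Finset.card_range]
  have hsum : ∑ i ∈ range (l' + k), f i ≤ b + k * q := by
    rw [Finset.sum_range_add, e1, e2]
  have hprod : ∏ i ∈ range (l' + k), f i = Epart l' b * q ^ k := by
    rw [Finset.prod_range_add, p1, p2]
  have := prod_le_epart (l' + k) (b + k * q) (range (l' + k)) f (Finset.card_range _) hsum
  rwa [hprod] at this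

lemma epart_add_le {l l' m m' : ℕ} (hl : 1 ≤ l) (hl' : 1 ≤ l') :
    Epart l m * Epart l' m' ≤ Epart (l + l') (m + m') := by
  set f : ℕ → ℕ := fun i => if i < l then (m / l + if i < m % l then 1 else 0)
      else (m' / l' + if i - l < m' % l' then 1 else 0) with hf
  have h1 : ∀ i ∈ range l, f i = m / l + if i < m % l then 1 else 0 := by
    intro i hi; simp only [hf]; rw [if_pos (Finset.mem_range.1 hi)]
  have h2 : ∀ i ∈ range l', f (l + i) = m' / l' + if i < m' % l' then 1 else 0 := by
    intro i _; simp only [hf]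
    rw [if_neg (by omega : ¬ l + i < l), show l + i - l = i from by omega]
  have e1 : ∑ i ∈ range l, f i = m := by
    rw [Finset.sum_congr rfl h1, balf_sum hl]
  have e2 : ∑ i ∈ range l', f (l + i) = m' := by
    rw [Finset.sum_congr rfl h2, balf_sum hl']
  have p1 : ∏ i ∈ range l, f i = Epart l m := by
    rw [Finset.prod_congr rfl h1, balf_prod hl]
  have p2 : ∏ i ∈ range l', f (l + i) = Epart l' m' := by
    rw [Finset.prod_congr rfl h2, balf_prod hl']
  have hsum : ∑ i ∈ range (l + l'), f i ≤ m + m' := by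
    rw [Finset.sum_range_add, e1, e2]
  have hprod : ∏ i ∈ range (l + l'), f i = Epart l m * Epart l' m' := by
    rw [Finset.prod_range_add, p1, p2]
  have := prod_le_epart (l + l') (m + m') (range (l + l')) f (Finset.card_range _) hsum
  rwa [hprod] at this

lemma exp_half_le {x : ℝ} (hx0 : 0 ≤ x) (hx1 : x ≤ 1) : Real.exp (x / 2) ≤ 1 + x := by
  have h1 : 1 - x / 2 ≤ Real.exp (-(x / 2)) := by
    have := Real.add_one_le_exp (-(x / 2))
    linarith
  have h2 : 0 < 1 - x / 2 := by linarith
  have hE : 0 < Real.exp (x / 2) := Real.exp_pos _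
  have h1' : (1 - x / 2) * Real.exp (x / 2) ≤ 1 := by
    have hmul := mul_le_mul_of_nonneg_right h1 hE.le
    rwa [← Real.exp_add, neg_add_cancel, Real.exp_zero] at hmul
  nlinarith [h1', h2, hx0, hx1]

lemma exp_le_sq {x : ℝ} (hx0 : 0 ≤ x) (hx1 : x ≤ 1) : Real.exp x ≤ (1 + x) ^ 2 := by
  have h := exp_half_le hx0 hx1
  have h2 : Real.exp x = Real.exp (x / 2) ^ 2 := by
    rw [sq, ← Real.exp_add]
    congr 1
    ring
  rw [h2]
  have : 0 ≤ Real.exp (x / 2) := (Real.exp_pos _).le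
  exact pow_le_pow_left₀ this h 2

lemma nugget {l' Q b : ℕ} (hl' : 1 ≤ l') (hQ : 1 ≤ Q) (hQb : l' * Q ≤ b) :
    Q ^ 2 * (b + 1) ^ l' ≤ (Q + 1) ^ 2 * b ^ l' := by
  have hb : 1 ≤ b := le_trans (by nlinarith) hQb
  have hbR : (0:ℝ) < (b:ℝ) := by exact_mod_cast hb
  have hQR : (0:ℝ) < (Q:ℝ) := by exact_mod_cast hQ
  have step1 : (((b:ℝ) + 1) / b) ^ l' ≤ Real.exp (l' * (1 / b)) := by
    rw [Real.exp_nat_mul]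
    apply pow_le_pow_left₀ (by positivity)
    have := Real.add_one_le_exp (1 / (b:ℝ))
    have heq : ((b:ℝ) + 1) / b = 1 + 1 / b := by field_simp
    rw [heq]; linarith
  have step2 : Real.exp ((l' : ℝ) * (1 / b)) ≤ Real.exp (1 / Q) := by
    apply Real.exp_le_exp.2
    rw [mul_one_div, div_le_div_iff₀ hbR hQR, one_mul]
    exact_mod_cast by nlinarith [hQb]
  have step3 : Real.exp (1 / (Q:ℝ)) ≤ (((Q:ℝ) + 1) / Q) ^ 2 := by
    have hx0 : (0:ℝ) ≤ 1 / Q := by positivity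
    have hx1 : 1 / (Q:ℝ) ≤ 1 := by
      rw [div_le_one hQR]; exact_mod_cast hQ
    have heq : ((Q:ℝ) + 1) / Q = 1 + 1 / Q := by field_simp
    rw [heq]
    exact exp_le_sq hx0 hx1
  have hchain : (((b:ℝ) + 1) / b) ^ l' ≤ (((Q:ℝ) + 1) / Q) ^ 2 :=
    step1.trans (step2.trans step3)
  rw [div_pow, div_pow, div_le_div_iff₀ (by positivity) (by positivity)] at hchain
  have final : ((Q:ℝ)) ^ 2 * ((b:ℝ) + 1) ^ l' ≤ ((Q:ℝ) + 1) ^ 2 * (b:ℝ) ^ l' := by nlinarith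
  exact_mod_cast final

lemma epart_step_sq {l' b : ℕ} (hl' : 1 ≤ l') (hb : l' ≤ b) :
    Epart l' b ^ 2 * (b + 1) ^ l' ≤ Epart l' (b + 1) ^ 2 * b ^ l' := by
  set Q := b / l' with hQdef
  have hQ1 : 1 ≤ Q := (Nat.one_le_div_iff (by omega)).2 hb
  have hQb : l' * Q ≤ b := by
    rw [hQdef, mul_comm]; exact Nat.div_mul_le_self b l'
  have hN := nugget hl' hQ1 hQb
  have hid := epart_id hl' b
  have h5 : Epart l' b ^ 2 * (b + 1) ^ l' * Q ^ 2 ≤ Epart l' (b + 1) ^ 2 * b ^ l' * Q ^ 2 := by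
    calc Epart l' b ^ 2 * (b + 1) ^ l' * Q ^ 2
        = Epart l' b ^ 2 * (Q ^ 2 * (b + 1) ^ l') := by ring
      _ ≤ Epart l' b ^ 2 * ((Q + 1) ^ 2 * b ^ l') := Nat.mul_le_mul_left _ hN
      _ = (Epart l' b * (Q + 1)) ^ 2 * b ^ l' := by ring
      _ = (Epart l' (b + 1) * Q) ^ 2 * b ^ l' := by rw [← hid]
      _ = Epart l' (b + 1) ^ 2 * b ^ l' * Q ^ 2 := by ring
  exact Nat.le_of_mul_le_mul_right h5 (by positivity)

lemma epart_sq {l' : ℕ} (hl' : 1 ≤ l') {a b : ℕ} (ha : l' ≤ a) (hab : a ≤ b) :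
    Epart l' a ^ 2 * b ^ l' ≤ Epart l' b ^ 2 * a ^ l' := by
  induction b, hab using Nat.le_induction with
  | base => exact le_refl _
  | succ b hab IH =>
    have hstep := epart_step_sq hl' (le_trans ha hab)
    have h1 : Epart l' a ^ 2 * (b + 1) ^ l' * b ^ l' ≤ Epart l' (b + 1) ^ 2 * a ^ l' * b ^ l' := by
      calc Epart l' a ^ 2 * (b + 1) ^ l' * b ^ l'
          = (Epart l' a ^ 2 * b ^ l') * (b + 1) ^ l' := by ring
        _ ≤ (Epart l' b ^ 2 * a ^ l') * (b + 1) ^ l' := Nat.mul_le_mul_right _ IH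
        _ = (Epart l' b ^ 2 * (b + 1) ^ l') * a ^ l' := by ring
        _ ≤ (Epart l' (b + 1) ^ 2 * b ^ l') * a ^ l' := Nat.mul_le_mul_right _ hstep
        _ = Epart l' (b + 1) ^ 2 * a ^ l' * b ^ l' := by ring
    have hbpos : 0 < b ^ l' := by
      have : 1 ≤ b := le_trans hl' (le_trans ha hab)
      positivity
    exact Nat.le_of_mul_le_mul_right h1 hbpos

lemma epart_steps {l' q : ℕ} (hl' : 1 ≤ l') (hq : 1 ≤ q) {a : ℕ} (hqa : l' * q ≤ a) :
    ∀ n, Epart l' (a + n) * q ^ n ≤ Epart l' a * (q + 1) ^ n := by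
  intro n
  induction n with
  | zero => simp
  | succ n IH =>
    set t := a + n with htdef
    have hqt : l' * q ≤ t := by omega
    have hQt : q ≤ t / l' := (Nat.le_div_iff_mul_le (by omega)).2 (by rw [mul_comm]; omega)
    set Qt := t / l' with hQtdef
    have hid := epart_id hl' t
    have hstep : Epart l' (t + 1) * q ≤ Epart l' t * (q + 1) := by
      have h5 : Epart l' (t + 1) * q * Qt ≤ Epart l' t * (q + 1) * Qt := by
        calc Epart l' (t + 1) * q * Qt = (Epart l' (t + 1) * Qt) * q := by ring
          _ = (Epart l' t * (Qt + 1)) * q := by rw [hid]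
          _ = Epart l' t * ((Qt + 1) * q) := by ring
          _ ≤ Epart l' t * ((q + 1) * Qt) := Nat.mul_le_mul_left _ (by nlinarith)
          _ = Epart l' t * (q + 1) * Qt := by ring
      exact Nat.le_of_mul_le_mul_right h5 (by omega)
    calc Epart l' (a + (n + 1)) * q ^ (n + 1)
        = (Epart l' (t + 1) * q) * q ^ n := by rw [show a + (n + 1) = t + 1 from by omega]; ring
      _ ≤ (Epart l' t * (q + 1)) * q ^ n := Nat.mul_le_mul_right _ hstep
      _ = (Epart l' t * q ^ n) * (q + 1) := by ring
      _ ≤ (Epart l' a * (q + 1) ^ n) * (q + 1) := Nat.mul_le_mul_right _ IH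
      _ = Epart l' a * (q + 1) ^ (n + 1) := by ring


set_option maxHeartbeats 1000000 in
/-- Basic properties of the function `E_ℓ(m)`. -/
theorem statement12 (l l' m m' : ℕ) (hl : 1 ≤ l) (hl' : 1 ≤ l') :
    (∀ f : Fin l → ℕ, ∑ i, f i ≤ m → ∏ i, f i ≤ Epart l m) ∧
      Epart l m * Epart l' m' ≤ Epart (l + l') (m + m') ∧
      ∀ μ : ℝ, 0 ≤ μ → l ≤ m → l' ≤ l → (m' : ℝ) ≤ (1 - μ) * (m : ℝ) →
        (Epart l' m' : ℝ) ≤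
          Real.exp (3 * ((l - l' : ℕ) : ℝ) - μ * (l : ℝ) / 2) *
            ((l : ℝ) / (m : ℝ)) ^ (l - l') * (Epart l m : ℝ) := by
  refine ⟨fun f hsum => ?_, epart_add_le hl hl', ?_⟩
  · exact prod_le_epart l m Finset.univ f (by simp) hsum
  · intro μ hμ0 hlm hl'l hm'le
    set k := l - l' with hkdef
    set q := m / l with hqdef
    set r := m % l with hrdef
    have hq1 : 1 ≤ q := (Nat.one_le_div_iff (by omega)).2 hlm
    have hdm : l * q + r = m := Nat.div_add_mod m l
    have hrl : r < l := Nat.mod_lt _ (by omega)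
    set b₀ := l' * q + r with hb₀def
    have hsum0 : l' * q + k * q = l * q := by
      rw [← Nat.add_mul]; congr 1; omega
    have hb₀m : b₀ + k * q = m := by omega
    have hl'b₀ : l' ≤ b₀ := by
      have := Nat.le_mul_of_pos_right l' (show 0 < q by omega)
      omega
    have hC1 : Epart l' b₀ * q ^ k ≤ Epart l m := by
      have h := epart_mul_le (l' := l') (k := k) (q := q) (b := b₀) hl'
      rwa [show l' + k = l from by omega, hb₀m] at h
    -- real positivity facts
    have hmR : (0:ℝ) < (m:ℝ) := by exact_mod_cast (by omega : 0 < m)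
    have hlR : (0:ℝ) < (l:ℝ) := by exact_mod_cast hl
    have hl'R : (0:ℝ) < (l':ℝ) := by exact_mod_cast hl'
    have hqR : (0:ℝ) < (q:ℝ) := by exact_mod_cast hq1
    have hb₀R : (0:ℝ) < (b₀:ℝ) := by exact_mod_cast (by omega : 0 < b₀)
    have hkR : (k:ℝ) = (l:ℝ) - (l':ℝ) := by
      have h : l' + k = l := by omega
      have : (l':ℝ) + (k:ℝ) = (l:ℝ) := by exact_mod_cast h
      linarith
    have hk0 : (0:ℝ) ≤ (k:ℝ) := Nat.cast_nonneg k
    -- m ≤ l * (q + 1)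
    have hmlq : (m:ℝ) ≤ (l:ℝ) * ((q:ℝ) + 1) := by
      have h : m ≤ l * (q + 1) := by
        have e : l * (q + 1) = l * q + l := by ring
        omega
      exact_mod_cast h
    have hqlm : (l:ℝ) * (q:ℝ) ≤ (m:ℝ) := by
      have h : l * q ≤ m := by omega
      exact_mod_cast h
    -- exp bounds for q
    have hexpq : (q:ℝ) + 1 ≤ (q:ℝ) * Real.exp (1 / (q:ℝ)) := by
      have h := Real.add_one_le_exp (1 / (q:ℝ))
      have h2 := mul_le_mul_of_nonneg_left h hqR.le
      have h3 : (q:ℝ) * (1 / (q:ℝ) + 1) = q + 1 := by field_simp; ring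
      rw [h3] at h2
      linarith
    have hinvq : Real.exp (-(1 / (q:ℝ))) * Real.exp (1 / (q:ℝ)) = 1 := by
      rw [← Real.exp_add, neg_add_cancel, Real.exp_zero]
    have s1 : Real.exp (-(1 / (q:ℝ))) * ((q:ℝ) + 1) ≤ (q:ℝ) := by
      calc Real.exp (-(1 / (q:ℝ))) * ((q:ℝ) + 1)
          ≤ Real.exp (-(1 / (q:ℝ))) * ((q:ℝ) * Real.exp (1 / (q:ℝ))) :=
            mul_le_mul_of_nonneg_left hexpq (Real.exp_pos _).le
        _ = (q:ℝ) * (Real.exp (-(1 / (q:ℝ))) * Real.exp (1 / (q:ℝ))) := by ring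
        _ = (q:ℝ) := by rw [hinvq, mul_one]
    have kB : Real.exp (-(1 / (q:ℝ))) ≤ ((l:ℝ) * q) / m := by
      rw [le_div_iff₀ hmR]
      calc Real.exp (-(1 / (q:ℝ))) * (m:ℝ)
          ≤ Real.exp (-(1 / (q:ℝ))) * ((l:ℝ) * ((q:ℝ) + 1)) :=
            mul_le_mul_of_nonneg_left hmlq (Real.exp_pos _).le
        _ = (l:ℝ) * (Real.exp (-(1 / (q:ℝ))) * ((q:ℝ) + 1)) := by ring
        _ ≤ (l:ℝ) * (q:ℝ) := mul_le_mul_of_nonneg_left s1 hlR.le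
    have kBpow : ∀ n : ℕ, Real.exp (-(n:ℝ)) ≤ (((l:ℝ) * q) / m) ^ n := by
      intro n
      have h1 : Real.exp (-(1 / (q:ℝ))) ^ n ≤ (((l:ℝ) * q) / m) ^ n :=
        pow_le_pow_left₀ (Real.exp_pos _).le kB n
      refine le_trans ?_ h1
      rw [← Real.exp_nat_mul]
      apply Real.exp_le_exp.2
      have hq1' : 1 / (q:ℝ) ≤ 1 := by
        rw [div_le_one hqR]; exact_mod_cast hq1
      have hn0 : (0:ℝ) ≤ (n:ℝ) := Nat.cast_nonneg n
      nlinarith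
    rcases lt_or_ge m' l' with hml' | hm'l'
    · -- trivial case : Epart l' m' = 0
      rw [epart_eq_zero hl' hml']
      push_cast
      positivity
    · -- main case
      have h1m' : (1:ℝ) ≤ (m':ℝ) := by exact_mod_cast le_trans hl' hm'l'
      have hμ1 : 0 < 1 - μ := by
        by_contra hcon
        push_neg at hcon
        have : (1 - μ) * (m:ℝ) ≤ 0 := mul_nonpos_of_nonpos_of_nonneg hcon hmR.le
        linarith
      have hμle1 : μ ≤ 1 := by linarith
      set EP := (Epart l' m' : ℝ) with hEPdef
      set EB := (Epart l' b₀ : ℝ) with hEBdef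
      set EM := (Epart l m : ℝ) with hEMdef
      have hEP0 : 0 ≤ EP := Nat.cast_nonneg _
      have hEB0 : (0:ℝ) < EB := by
        rw [hEBdef]; exact_mod_cast epart_pos hl' hl'b₀
      have hEM0 : (0:ℝ) < EM := by
        rw [hEMdef]; exact_mod_cast epart_pos hl hlm
      have t2 : EB * (q:ℝ) ^ k ≤ EM := by
        rw [hEBdef, hEMdef]; exact_mod_cast hC1
      rcases le_or_gt m' b₀ with hAB | hAB
      · -- Regime A
        have hT := epart_sq hl' hm'l' hAB
        have t1 : EP ^ 2 * (b₀:ℝ) ^ l' ≤ EB ^ 2 * (m':ℝ) ^ l' := by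
          rw [hEPdef, hEBdef]; exact_mod_cast hT
        -- m' ≤ exp(k/l' - μ) * b₀
        have u0 : (l':ℝ) * (m:ℝ) ≤ (l:ℝ) * (b₀:ℝ) := by
          have h : l' * m ≤ l * b₀ := by
            have e1 : l' * m = l * (l' * q) + l' * r := by rw [← hdm]; ring
            have e2 : l * b₀ = l * (l' * q) + l * r := by rw [hb₀def]; ring
            have e3 : l' * r ≤ l * r := Nat.mul_le_mul_right r hl'l
            omega
          exact_mod_cast h
        have u3 : (l:ℝ) ≤ Real.exp ((k:ℝ) / l') * l' := by
          have h := Real.add_one_le_exp ((k:ℝ) / l')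
          have h2 := mul_le_mul_of_nonneg_right h hl'R.le
          have h3 : ((k:ℝ) / l' + 1) * l' = (k:ℝ) + l' := by field_simp
          rw [h3] at h2
          linarith [hkR]
        have hm'b : (m':ℝ) ≤ Real.exp ((k:ℝ) / l' - μ) * b₀ := by
          have c1 : (m':ℝ) * l' ≤ (1 - μ) * ((m:ℝ) * l') := by
            have := mul_le_mul_of_nonneg_right hm'le hl'R.le
            linarith [this]
          have c2 : (1 - μ) * ((m:ℝ) * l') ≤ (1 - μ) * ((l:ℝ) * b₀) := by
            apply mul_le_mul_of_nonneg_left _ hμ1.le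
            nlinarith [u0]
          have c3 : (1 - μ) * ((l:ℝ) * b₀) ≤ Real.exp (-μ) * ((l:ℝ) * b₀) := by
            apply mul_le_mul_of_nonneg_right _ (by positivity)
            have := Real.add_one_le_exp (-μ)
            linarith
          have c4 : Real.exp (-μ) * ((l:ℝ) * b₀) ≤ Real.exp (-μ) * ((Real.exp ((k:ℝ) / l') * l') * b₀) := by
            apply mul_le_mul_of_nonneg_left _ (Real.exp_pos _).le
            exact mul_le_mul_of_nonneg_right u3 hb₀R.le
          have c5 : Real.exp (-μ) * ((Real.exp ((k:ℝ) / l') * l') * b₀)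
              = (Real.exp ((k:ℝ) / l' - μ) * b₀) * l' := by
            rw [show (k:ℝ) / l' - μ = -μ + (k:ℝ)/l' from by ring, Real.exp_add]
            ring
          have := le_trans c1 (le_trans c2 (le_trans c3 (c5 ▸ c4)))
          exact le_of_mul_le_mul_right this hl'R
        have powm' : (m':ℝ) ^ l' ≤ Real.exp ((k:ℝ) - μ * l') * (b₀:ℝ) ^ l' := by
          calc (m':ℝ) ^ l' ≤ (Real.exp ((k:ℝ) / l' - μ) * b₀) ^ l' :=
              pow_le_pow_left₀ (Nat.cast_nonneg _) hm'b l'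
            _ = Real.exp ((k:ℝ) / l' - μ) ^ l' * (b₀:ℝ) ^ l' := mul_pow _ _ _
            _ = Real.exp ((k:ℝ) - μ * l') * (b₀:ℝ) ^ l' := by
                rw [← Real.exp_nat_mul]
                congr 1
                field_simp
        have hEPsq : EP ^ 2 ≤ EB ^ 2 * Real.exp ((k:ℝ) - μ * l') := by
          have c1 : EP ^ 2 * (b₀:ℝ) ^ l' ≤ (EB ^ 2 * Real.exp ((k:ℝ) - μ * l')) * (b₀:ℝ) ^ l' := by
            calc EP ^ 2 * (b₀:ℝ) ^ l' ≤ EB ^ 2 * (m':ℝ) ^ l' := t1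
              _ ≤ EB ^ 2 * (Real.exp ((k:ℝ) - μ * l') * (b₀:ℝ) ^ l') :=
                  mul_le_mul_of_nonneg_left powm' (by positivity)
              _ = (EB ^ 2 * Real.exp ((k:ℝ) - μ * l')) * (b₀:ℝ) ^ l' := by ring
          exact le_of_mul_le_mul_right c1 (by positivity)
        have hh2 : Real.exp (-(k:ℝ)) ^ 2 ≤ ((((l:ℝ) * q) / m) ^ k) ^ 2 := by
          apply pow_le_pow_left₀ (Real.exp_pos _).le
          have := kBpow k
          exact this
        have hh1 : Real.exp ((k:ℝ) - μ * l') ≤ Real.exp (6 * (k:ℝ) - μ * l) * Real.exp (-(k:ℝ)) ^ 2 := by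
          rw [show Real.exp (-(k:ℝ)) ^ 2 = Real.exp (-(2*(k:ℝ))) from by
            rw [sq, ← Real.exp_add]; congr 1; ring, ← Real.exp_add]
          apply Real.exp_le_exp.2
          nlinarith [hkR, hμle1, hμ0, hk0]
        -- final squared comparison
        have hfinal : EP ^ 2 ≤ (Real.exp (3 * (k:ℝ) - μ * l / 2) * ((l:ℝ)/m) ^ k * EM) ^ 2 := by
          have e1 : (Real.exp (3 * (k:ℝ) - μ * l / 2) * ((l:ℝ)/m) ^ k * EM) ^ 2
              = Real.exp (6 * (k:ℝ) - μ * l) * (((l:ℝ)/m) ^ k) ^ 2 * EM ^ 2 := by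
            rw [mul_pow, mul_pow, show Real.exp (3 * (k:ℝ) - μ * l / 2) ^ 2
              = Real.exp (6 * (k:ℝ) - μ * l) from by rw [sq, ← Real.exp_add]; congr 1; ring]
          rw [e1]
          have e2 : EB ^ 2 * ((q:ℝ) ^ k) ^ 2 ≤ EM ^ 2 := by
            calc EB ^ 2 * ((q:ℝ) ^ k) ^ 2 = (EB * (q:ℝ) ^ k) ^ 2 := by ring
              _ ≤ EM ^ 2 := pow_le_pow_left₀ (by positivity) t2 2
          have e3 : ((((l:ℝ) * q) / m) ^ k) ^ 2 = (((l:ℝ)/m) ^ k) ^ 2 * ((q:ℝ) ^ k) ^ 2 := by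
            rw [← mul_pow, ← mul_pow, div_mul_eq_mul_div]
          calc EP ^ 2 ≤ EB ^ 2 * Real.exp ((k:ℝ) - μ * l') := hEPsq
            _ ≤ EB ^ 2 * (Real.exp (6 * (k:ℝ) - μ * l) * Real.exp (-(k:ℝ)) ^ 2) :=
                mul_le_mul_of_nonneg_left hh1 (by positivity)
            _ ≤ EB ^ 2 * (Real.exp (6 * (k:ℝ) - μ * l) * ((((l:ℝ) * q) / m) ^ k) ^ 2) := by
                apply mul_le_mul_of_nonneg_left _ (by positivity)
                exact mul_le_mul_of_nonneg_left hh2 (Real.exp_pos _).le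
            _ = Real.exp (6 * (k:ℝ) - μ * l) * ((((l:ℝ)/m) ^ k) ^ 2 * ((q:ℝ) ^ k) ^ 2) * EB ^ 2 := by
                rw [e3]; ring
            _ = Real.exp (6 * (k:ℝ) - μ * l) * (((l:ℝ)/m) ^ k) ^ 2 * (EB ^ 2 * ((q:ℝ) ^ k) ^ 2) := by
                ring
            _ ≤ Real.exp (6 * (k:ℝ) - μ * l) * (((l:ℝ)/m) ^ k) ^ 2 * EM ^ 2 :=
                mul_le_mul_of_nonneg_left e2 (by positivity)
        exact (abs_le_of_sq_le_sq' hfinal (by positivity)).2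
      · -- Regime B
        have hm'm : m' ≤ m := by
          have : (m':ℝ) ≤ (m:ℝ) := by nlinarith
          exact_mod_cast this
        have hn1 : Epart l' m' * q ^ (k * q) ≤ Epart l' b₀ * (q + 1) ^ (k * q) := by
          calc Epart l' m' * q ^ (k * q) ≤ Epart l' m * q ^ (k * q) :=
              Nat.mul_le_mul_right _ (epart_mono hl' hm'm)
            _ ≤ Epart l' b₀ * (q + 1) ^ (k * q) := by
              have h := epart_steps hl' hq1 (show l' * q ≤ b₀ by omega) (k * q)
              rwa [hb₀m] at h
        have hn2 : Epart l' m' * q ^ (k * q) * q ^ k ≤ Epart l m * (q + 1) ^ (k * q) := by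
          calc Epart l' m' * q ^ (k * q) * q ^ k
              ≤ Epart l' b₀ * (q + 1) ^ (k * q) * q ^ k := Nat.mul_le_mul_right _ hn1
            _ = Epart l' b₀ * q ^ k * (q + 1) ^ (k * q) := by ring
            _ ≤ Epart l m * (q + 1) ^ (k * q) := Nat.mul_le_mul_right _ hC1
        have hc : EP * (q:ℝ) ^ (k * q) * (q:ℝ) ^ k ≤ EM * ((q:ℝ) + 1) ^ (k * q) := by
          rw [hEPdef, hEMdef]
          exact_mod_cast hn2
        -- μ * l ≤ k
        have hb₀cast : (b₀:ℝ) + (k:ℝ) * q = (m:ℝ) := by exact_mod_cast hb₀m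
        have hABc : (b₀:ℝ) + 1 ≤ (m':ℝ) := by exact_mod_cast hAB
        have hμm : μ * m ≤ (k:ℝ) * q := by nlinarith
        have hμl : μ * (l:ℝ) ≤ (k:ℝ) := by
          have e1 : μ * m * l ≤ (k:ℝ) * q * l := mul_le_mul_of_nonneg_right hμm hlR.le
          have e2 : (k:ℝ) * ((l:ℝ) * q) ≤ (k:ℝ) * m := mul_le_mul_of_nonneg_left hqlm hk0
          have e3 : μ * (l:ℝ) * m ≤ (k:ℝ) * m := by nlinarith
          exact le_of_mul_le_mul_right e3 hmR
        -- key bound: (q+1)^(k*q) ≤ exp(3k - μl/2) * ((l*q)/m)^k * q^(k*q)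
        have hq1exp : ((q:ℝ) + 1) ^ (k * q) ≤ Real.exp (k:ℝ) * (q:ℝ) ^ (k * q) := by
          have h1 : ((q:ℝ) + 1) ^ (k * q) ≤ ((q:ℝ) * Real.exp (1 / (q:ℝ))) ^ (k * q) :=
            pow_le_pow_left₀ (by positivity) hexpq _
          refine h1.trans (le_of_eq ?_)
          rw [mul_pow, ← Real.exp_nat_mul]
          rw [show ((k * q : ℕ):ℝ) * (1 / (q:ℝ)) = (k:ℝ) from by push_cast; field_simp]
          ring
        have hKeyB : EM * ((q:ℝ) + 1) ^ (k * q)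
            ≤ Real.exp (3 * (k:ℝ) - μ * l / 2) * ((l:ℝ)/m) ^ k * EM * ((q:ℝ) ^ (k * q) * (q:ℝ) ^ k) := by
          have hexpk : Real.exp (k:ℝ) ≤ Real.exp (3 * (k:ℝ) - μ * l / 2) * Real.exp (-(k:ℝ)) := by
            rw [← Real.exp_add]
            apply Real.exp_le_exp.2
            linarith
          have hlqm : Real.exp (-(k:ℝ)) ≤ (((l:ℝ) * q) / m) ^ k := kBpow k
          calc EM * ((q:ℝ) + 1) ^ (k * q)
              ≤ EM * (Real.exp (k:ℝ) * (q:ℝ) ^ (k * q)) :=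
                mul_le_mul_of_nonneg_left hq1exp hEM0.le
            _ ≤ EM * ((Real.exp (3 * (k:ℝ) - μ * l / 2) * Real.exp (-(k:ℝ))) * (q:ℝ) ^ (k * q)) := by
                apply mul_le_mul_of_nonneg_left _ hEM0.le
                exact mul_le_mul_of_nonneg_right hexpk (by positivity)
            _ ≤ EM * ((Real.exp (3 * (k:ℝ) - μ * l / 2) * (((l:ℝ) * q) / m) ^ k) * (q:ℝ) ^ (k * q)) := by
                apply mul_le_mul_of_nonneg_left _ hEM0.le
                apply mul_le_mul_of_nonneg_right _ (by positivity)
                exact mul_le_mul_of_nonneg_left hlqm (Real.exp_pos _).le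
            _ = Real.exp (3 * (k:ℝ) - μ * l / 2) * ((l:ℝ)/m) ^ k * EM * ((q:ℝ) ^ (k * q) * (q:ℝ) ^ k) := by
                rw [show (((l:ℝ) * q) / m) ^ k = ((l:ℝ)/m) ^ k * (q:ℝ) ^ k from by
                  rw [← mul_pow, div_mul_eq_mul_div]]
                ring
        have hfin : EP * ((q:ℝ) ^ (k * q) * (q:ℝ) ^ k)
            ≤ Real.exp (3 * (k:ℝ) - μ * l / 2) * ((l:ℝ)/m) ^ k * EM * ((q:ℝ) ^ (k * q) * (q:ℝ) ^ k) := by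
          calc EP * ((q:ℝ) ^ (k * q) * (q:ℝ) ^ k) = EP * (q:ℝ) ^ (k * q) * (q:ℝ) ^ k := by ring
            _ ≤ EM * ((q:ℝ) + 1) ^ (k * q) := hc
            _ ≤ _ := hKeyB
        exact le_of_mul_le_mul_right hfin (by positivity)
end
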